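/- arXiv:1506.08564 — 2 statements merged into one kernel-verified Lean document; each statement's English description precedes it below -/
import Mathlib

section
/- For each integer k ≥ 1 let m_Z(0,k,t) = Σ_{i≥0} t^{k+2i}/(i!·(k+i)!) for t ≥ 0, and let t*_k be the unique t > 0 with m_Z(0,k,t) = 1. Let α* be the unique solution in (1,∞) of coth α = α. Then t*_k/k → (1/2)·√(α*² − 1) as k → ∞. Equivalently, for any a ≥ 0, m_Z(0,k,ak) → 0 as k → ∞ if a < (1/2)√(α*²−1), and m_Z(0,k,ak) → ∞ as k → ∞ if a > (1/2)√(α*²−1). -/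
open Filter

/-- `m_ℤ(0,k,t) = Σ_{i≥0} t^{k+2i}/(i!·(k+i)!)`, the path-generating function between
vertices at distance `k` in the nearest-neighbour graph on `ℤ`. -/
noncomputable def mZ (k : ℕ) (t : ℝ) : ℝ :=
  ∑' i : ℕ, t ^ (k + 2 * i) / ((Nat.factorial i : ℝ) * (Nat.factorial (k + i) : ℝ))

namespace MZaux

open Real

noncomputable def term (k i : ℕ) (t : ℝ) : ℝ :=
  t ^ (k + 2 * i) / ((Nat.factorial i : ℝ) * (Nat.factorial (k + i) : ℝ))

lemma term_nonneg {k i : ℕ} {t : ℝ} (ht : 0 ≤ t) : 0 ≤ term k i t := by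
  unfold term; positivity

lemma summable_term (k : ℕ) {t : ℝ} (ht : 0 ≤ t) : Summable (fun i => term k i t) := by
  have hle : ∀ i, term k i t ≤ t ^ k * ((t ^ 2) ^ i / (Nat.factorial i : ℝ)) := by
    intro i
    unfold term
    rw [pow_add, pow_mul, mul_div_assoc]
    gcongr
    have h1 : (1 : ℝ) ≤ (Nat.factorial (k + i) : ℝ) := by
      exact_mod_cast Nat.one_le_iff_ne_zero.mpr (Nat.factorial_ne_zero _)
    exact le_mul_of_one_le_right (Nat.cast_nonneg _) h1
  exact Summable.of_nonneg_of_le (fun i => term_nonneg ht) hle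
    ((Real.summable_pow_div_factorial (t ^ 2)).mul_left _)

lemma mZ_eq (k : ℕ) (t : ℝ) : mZ k t = ∑' i, term k i t := rfl

lemma term_le_mZ (k i : ℕ) {t : ℝ} (ht : 0 ≤ t) : term k i t ≤ mZ k t :=
  Summable.le_tsum (summable_term k ht) i (fun j _ => term_nonneg ht)

lemma mZ_nonneg (k : ℕ) {t : ℝ} (ht : 0 ≤ t) : 0 ≤ mZ k t :=
  tsum_nonneg (fun i => term_nonneg ht)

lemma mZ_mono (k : ℕ) {t₁ t₂ : ℝ} (h0 : 0 ≤ t₁) (h : t₁ ≤ t₂) : mZ k t₁ ≤ mZ k t₂ := by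
  apply Summable.tsum_le_tsum _ (summable_term k h0) (summable_term k (h0.trans h))
  intro i
  unfold term
  gcongr


lemma mZ_zero {k : ℕ} (hk : 1 ≤ k) : mZ k 0 = 0 := by
  rw [mZ_eq]
  convert tsum_zero with i
  unfold term
  rw [zero_pow (by omega)]
  simp

/-- `n^n ≤ n! * e^n`. -/
lemma pow_le_factorial_mul_exp (n : ℕ) : (n : ℝ) ^ n ≤ (Nat.factorial n : ℝ) * Real.exp n := by
  have h : (n : ℝ) ^ n / (Nat.factorial n : ℝ) ≤ Real.exp n := by
    calc (n : ℝ) ^ n / (Nat.factorial n : ℝ)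
        ≤ ∑ i ∈ Finset.range (n + 1), (n : ℝ) ^ i / (Nat.factorial i : ℝ) := by
          apply Finset.single_le_sum (f := fun i => (n : ℝ) ^ i / (Nat.factorial i : ℝ))
            (fun i _ => by positivity) (Finset.self_mem_range_succ n)
      _ ≤ Real.exp n := by
          have := Real.sum_le_exp_of_nonneg (x := (n : ℝ)) (Nat.cast_nonneg n) (n + 1)
          simpa using this
  have hf : (0:ℝ) < (Nat.factorial n : ℝ) := Nat.cast_pos.mpr (Nat.factorial_pos n)
  rw [div_le_iff₀ hf] at h
  linarith [h]

/-- Stirling upper bound (crude): `n! ≤ e · (2n) · n^n / e^n` for `n ≥ 1`. -/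
lemma factorial_le (n : ℕ) (hn : 1 ≤ n) :
    (Nat.factorial n : ℝ) ≤ Real.exp 1 * (2 * n) * ((n : ℝ) ^ n / Real.exp n) := by
  obtain ⟨m, rfl⟩ := Nat.exists_eq_add_of_le hn
  have h1 : Stirling.stirlingSeq (1 + m) ≤ Stirling.stirlingSeq 1 := by
    have := Stirling.stirlingSeq'_antitone (Nat.zero_le m)
    simpa [Nat.succ_eq_add_one, Nat.add_comm] using this
  rw [Stirling.stirlingSeq_one] at h1
  set N : ℕ := 1 + m with hN
  have hNpos : (0:ℝ) < (N:ℝ) := by positivity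
  have hX : (0:ℝ) < Real.sqrt (2 * (N:ℝ)) * (((N:ℕ):ℝ) / Real.exp 1) ^ N := by positivity
  unfold Stirling.stirlingSeq at h1
  rw [div_le_div_iff₀ hX (Real.sqrt_pos.mpr two_pos)] at h1
  -- h1 : N! * √2 ≤ e * (√(2N) * (N/e)^N)
  have hN1 : (1:ℝ) ≤ (N:ℝ) := by exact_mod_cast hn
  have hsq : Real.sqrt (2 * (N:ℝ)) ≤ 2 * (N:ℝ) := by
    rw [Real.sqrt_le_left (by positivity)]
    nlinarith
  have hsqrt2 : (1:ℝ) ≤ Real.sqrt 2 := by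
    rw [show (1:ℝ) = Real.sqrt 1 from (Real.sqrt_one).symm]
    exact Real.sqrt_le_sqrt (by norm_num)
  have h2 : (Nat.factorial N : ℝ) ≤ Real.exp 1 * (2 * (N:ℝ)) * (((N:ℝ)) / Real.exp 1) ^ N := by
    calc (Nat.factorial N : ℝ) ≤ (Nat.factorial N : ℝ) * Real.sqrt 2 :=
          le_mul_of_one_le_right (Nat.cast_nonneg _) hsqrt2
      _ ≤ Real.exp 1 * (Real.sqrt (2 * (N:ℝ)) * (((N:ℝ)) / Real.exp 1) ^ N) := h1
      _ ≤ Real.exp 1 * ((2 * (N:ℝ)) * (((N:ℝ)) / Real.exp 1) ^ N) := by gcongr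
      _ = _ := by ring
  calc (Nat.factorial N : ℝ) ≤ Real.exp 1 * (2 * (N:ℝ)) * (((N:ℝ)) / Real.exp 1) ^ N := h2
    _ = Real.exp 1 * (2 * (N:ℝ)) * ((N:ℝ) ^ N / Real.exp N) := by
        rw [div_pow, ← Real.exp_one_pow]
    _ = _ := by norm_num



noncomputable def Astar (α : ℝ) : ℝ := Real.sqrt (α ^ 2 - 1) / 2

lemma Astar_pos {α : ℝ} (hα : 1 < α) : 0 < Astar α := by
  unfold Astar
  have : (0:ℝ) < α ^ 2 - 1 := by nlinarith
  positivity

lemma log_Astar {α : ℝ} (hα : 1 < α) :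
    Real.log (Astar α) = (Real.log (α - 1) + Real.log (α + 1)) / 2 - Real.log 2 := by
  unfold Astar
  have h1 : (0:ℝ) < α - 1 := by linarith
  have h2 : (0:ℝ) < α + 1 := by linarith
  rw [Real.log_div (Real.sqrt_pos.mpr (by nlinarith)).ne' (by norm_num),
    Real.log_sqrt (by nlinarith),
    show α ^ 2 - 1 = (α - 1) * (α + 1) by ring, Real.log_mul h1.ne' h2.ne']

/-- `g α s = s log s + (1+s) log(1+s) − (1+2s)(log A + 1)` where `A = Astar α`. -/
noncomputable def g (α s : ℝ) : ℝ :=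
  s * Real.log s + (1 + s) * Real.log (1 + s) - (1 + 2 * s) * (Real.log (Astar α) + 1)

lemma g_continuous (α : ℝ) : Continuous (g α) := by
  unfold g
  apply Continuous.sub
  · apply Continuous.add Real.continuous_mul_log
    exact Real.continuous_mul_log.comp (continuous_const.add continuous_id)
  · fun_prop

lemma g_hasDerivAt {α s : ℝ} (hs : 0 < s) :
    HasDerivAt (g α) (Real.log s + Real.log (1 + s) - 2 * Real.log (Astar α)) s := by
  have h1 : HasDerivAt (fun x : ℝ => x * Real.log x) (Real.log s + 1) s :=
    Real.hasDerivAt_mul_log hs.ne'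
  have h2 : HasDerivAt (fun x : ℝ => (1 + x) * Real.log (1 + x)) (Real.log (1 + s) + 1) s := by
    have ha : HasDerivAt (fun x : ℝ => 1 + x) 1 s := (hasDerivAt_id s).const_add 1
    have hb : HasDerivAt (fun y : ℝ => y * Real.log y) (Real.log (1 + s) + 1) (1 + s) :=
      Real.hasDerivAt_mul_log (by linarith : (1:ℝ) + s ≠ 0)
    have := hb.comp s ha
    rw [mul_one] at this
    exact this
  have h3 : HasDerivAt (fun x : ℝ => (1 + 2 * x) * (Real.log (Astar α) + 1))
      (2 * (Real.log (Astar α) + 1)) s := by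
    simpa using ((hasDerivAt_id s).const_mul 2).const_add 1 |>.mul_const (Real.log (Astar α) + 1)
  have := (h1.add h2).sub h3
  refine this.congr_deriv ?_
  ring

lemma g_s0 {α : ℝ} (hα : 1 < α)
    (hlog : Real.log (α + 1) - Real.log (α - 1) = 2 * α) : g α ((α - 1) / 2) = 0 := by
  have h1 : (0:ℝ) < α - 1 := by linarith
  have h2 : (0:ℝ) < α + 1 := by linarith
  unfold g
  rw [show (1:ℝ) + (α - 1) / 2 = (α + 1) / 2 by ring,
    Real.log_div h1.ne' (by norm_num), Real.log_div h2.ne' (by norm_num),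
    log_Astar hα]
  ring_nf
  ring_nf at hlog
  linarith [hlog]

lemma log_s_add_log_one_add {α : ℝ} (hα : 1 < α) :
    Real.log ((α - 1) / 2) + Real.log (1 + (α - 1) / 2) = 2 * Real.log (Astar α) := by
  have h1 : (0:ℝ) < α - 1 := by linarith
  have h2 : (0:ℝ) < α + 1 := by linarith
  rw [show (1:ℝ) + (α - 1) / 2 = (α + 1) / 2 by ring,
    Real.log_div h1.ne' (by norm_num), Real.log_div h2.ne' (by norm_num), log_Astar hα]
  ring

lemma g_nonneg {α : ℝ} (hα : 1 < α)
    (hlog : Real.log (α + 1) - Real.log (α - 1) = 2 * α) {s : ℝ} (hs : 0 ≤ s) :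
    0 ≤ g α s := by
  set s₀ : ℝ := (α - 1) / 2 with hs₀
  have hs₀pos : 0 < s₀ := by simp only [hs₀]; linarith
  rcases le_total s s₀ with h | h
  · -- antitone on [0, s₀]
    have hanti : AntitoneOn (g α) (Set.Icc 0 s₀) := by
      apply antitoneOn_of_hasDerivWithinAt_nonpos (convex_Icc 0 s₀)
        ((g_continuous α).continuousOn)
        (f' := fun x => Real.log x + Real.log (1 + x) - 2 * Real.log (Astar α))
      · intro x hx
        rw [interior_Icc] at hx
        exact (g_hasDerivAt hx.1).hasDerivWithinAt
      · intro x hx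
        rw [interior_Icc] at hx
        have hx1 : Real.log x ≤ Real.log s₀ := Real.log_le_log hx.1 hx.2.le
        have hx2 : Real.log (1 + x) ≤ Real.log (1 + s₀) :=
          Real.log_le_log (by linarith [hx.1]) (by linarith [hx.2])
        have := log_s_add_log_one_add hα
        simp only [← hs₀] at this
        linarith
    have := hanti ⟨hs, h⟩ ⟨hs₀pos.le, le_refl _⟩ h
    rw [g_s0 hα hlog] at this
    exact this
  · -- monotone on [s₀, ∞)
    have hmono : MonotoneOn (g α) (Set.Ici s₀) := by
      apply monotoneOn_of_hasDerivWithinAt_nonneg (convex_Ici s₀)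
        ((g_continuous α).continuousOn)
        (f' := fun x => Real.log x + Real.log (1 + x) - 2 * Real.log (Astar α))
      · intro x hx
        rw [interior_Ici] at hx
        exact (g_hasDerivAt (hs₀pos.trans hx)).hasDerivWithinAt
      · intro x hx
        rw [interior_Ici] at hx
        have hx' : s₀ < x := hx
        have hx1 : Real.log s₀ ≤ Real.log x := Real.log_le_log hs₀pos hx'.le
        have hx2 : Real.log (1 + s₀) ≤ Real.log (1 + x) :=
          Real.log_le_log (by linarith) (by linarith)
        have := log_s_add_log_one_add hα
        simp only [← hs₀] at this
        linarith
    have := hmono (Set.mem_Ici.mpr (le_refl s₀)) (Set.mem_Ici.mpr h) h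
    rw [g_s0 hα hlog] at this
    exact this



/-- the exponential rate `ψ a s = (1+2s)(log a + 1) − s log s − (1+s) log(1+s)`. -/
noncomputable def psi (a s : ℝ) : ℝ :=
  (1 + 2 * s) * (Real.log a + 1) - s * Real.log s - (1 + s) * Real.log (1 + s)

lemma psi_continuous (a : ℝ) : Continuous (psi a) := by
  unfold psi
  apply Continuous.sub
  apply Continuous.sub
  · fun_prop
  · exact Real.continuous_mul_log
  · exact Real.continuous_mul_log.comp (continuous_const.add continuous_id)

lemma psi_sub_psi (a b s : ℝ) :
    psi a s - psi b s = (1 + 2 * s) * (Real.log a - Real.log b) := by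
  unfold psi; ring

/-- the key scaling identity: `k · ψ_a(i/k) = (k+2i)·log(ak) + (k+2i) − i·log i − (k+i)·log(k+i)`. -/
lemma psi_scaling {a : ℝ} (ha : 0 < a) {k : ℕ} (hk : 1 ≤ k) (i : ℕ) :
    (k : ℝ) * psi a (i / k) =
      ((k : ℝ) + 2 * i) * Real.log (a * k) + ((k : ℝ) + 2 * i)
        - (i : ℝ) * Real.log i - ((k : ℝ) + i) * Real.log ((k : ℝ) + i) := by
  have hK : (0:ℝ) < (k:ℝ) := by exact_mod_cast hk
  have e1 : (1 : ℝ) + (i:ℝ) / k = ((k:ℝ) + i) / k := by field_simp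
  have e2 : Real.log (((k:ℝ) + i) / k) = Real.log ((k:ℝ) + i) - Real.log k :=
    Real.log_div (by positivity) hK.ne'
  have e3 : (i:ℝ) * Real.log ((i:ℝ) / k) = (i:ℝ) * Real.log i - (i:ℝ) * Real.log k := by
    rcases Nat.eq_zero_or_pos i with hi | hi
    · subst hi; simp
    · have hI : (0:ℝ) < (i:ℝ) := by exact_mod_cast hi
      rw [Real.log_div hI.ne' hK.ne']; ring
  have e4 : Real.log (a * k) = Real.log a + Real.log k := Real.log_mul ha.ne' hK.ne'
  unfold psi
  rw [e1, e2, e4]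
  have expand : (k:ℝ) * ((1 + 2 * ((i:ℝ) / k)) * (Real.log a + 1)
      - (i:ℝ) / k * Real.log ((i:ℝ) / k)
      - ((k:ℝ) + i) / k * (Real.log ((k:ℝ) + i) - Real.log k))
      = ((k:ℝ) + 2 * i) * (Real.log a + 1) - (i:ℝ) * Real.log ((i:ℝ)/k)
        - ((k:ℝ) + i) * (Real.log ((k:ℝ) + i) - Real.log k) := by
    field_simp
  rw [expand, e3]
  ring

/-- exponentiated identity. -/
lemma key_identity {a : ℝ} (ha : 0 < a) {k : ℕ} (hk : 1 ≤ k) (i : ℕ) :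
    (a * k) ^ (k + 2 * i) * Real.exp (k + 2 * i) =
      Real.exp ((k : ℝ) * psi a (i / k)) * ((i : ℝ) ^ i * ((k : ℝ) + i) ^ (k + i)) := by
  have hK : (0:ℝ) < (k:ℝ) := by exact_mod_cast hk
  have hak : (0:ℝ) < a * k := by positivity
  have h1 : Real.exp (((k : ℝ) + 2 * i) * Real.log (a * k)) = (a * k) ^ (k + 2 * i) := by
    rw [show ((k:ℝ) + 2 * i) = ((k + 2 * i : ℕ) : ℝ) by push_cast; ring,
      Real.exp_nat_mul, Real.exp_log hak]
  have h2 : Real.exp ((i : ℝ) * Real.log i) = (i : ℝ) ^ i := by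
    rcases Nat.eq_zero_or_pos i with hi | hi
    · subst hi; simp
    · have hI : (0:ℝ) < (i:ℝ) := by exact_mod_cast hi
      rw [Real.exp_nat_mul, Real.exp_log hI]
  have h3 : Real.exp (((k : ℝ) + i) * Real.log ((k : ℝ) + i)) = ((k : ℝ) + i) ^ (k + i) := by
    rw [show ((k:ℝ) + i) = ((k + i : ℕ) : ℝ) by push_cast; ring, Real.exp_nat_mul,
      Real.exp_log (by positivity)]
  have hA : Real.exp (((k : ℝ) + 2 * i) * Real.log (a * k) + ((k : ℝ) + 2 * i))
      = (a * k) ^ (k + 2 * i) * Real.exp (((k:ℝ) + 2 * i)) := by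
    rw [Real.exp_add, h1]
  have hB : Real.exp ((i : ℝ) * Real.log i + ((k : ℝ) + i) * Real.log ((k : ℝ) + i))
      = (i : ℝ) ^ i * ((k : ℝ) + i) ^ (k + i) := by
    rw [Real.exp_add, h2, h3]
  have hpos : (0:ℝ) < (i : ℝ) ^ i * ((k : ℝ) + i) ^ (k + i) := by
    rcases Nat.eq_zero_or_pos i with hi | hi
    · subst hi; positivity
    · have hI : (0:ℝ) < (i:ℝ) := by exact_mod_cast hi
      positivity
  rw [psi_scaling ha hk i,
    show ((k : ℝ) + 2 * i) * Real.log (a * k) + ((k : ℝ) + 2 * i)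
        - (i : ℝ) * Real.log i - ((k : ℝ) + i) * Real.log ((k : ℝ) + i)
      = (((k : ℝ) + 2 * i) * Real.log (a * k) + ((k : ℝ) + 2 * i))
        - ((i : ℝ) * Real.log i + ((k : ℝ) + i) * Real.log ((k : ℝ) + i)) by ring,
    Real.exp_sub, hA, hB, div_mul_cancel₀ _ hpos.ne']


lemma factorial_mul_exp_le (n : ℕ) (hn : 1 ≤ n) :
    (Nat.factorial n : ℝ) * Real.exp n ≤ Real.exp 1 * (2 * n) * (n : ℝ) ^ n := by
  have h := factorial_le n hn
  rw [mul_div_assoc'] at h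
  rw [le_div_iff₀ (Real.exp_pos _)] at h
  exact h

lemma prod_factorial_le {k i : ℕ} (hk : 1 ≤ k) (hi : 1 ≤ i) :
    (Nat.factorial i : ℝ) * (Nat.factorial (k + i) : ℝ) * Real.exp ((k:ℝ) + 2 * i)
      ≤ 4 * Real.exp 2 * i * ((k:ℝ) + i) * ((i : ℝ) ^ i * ((k : ℝ) + i) ^ (k + i)) := by
  have h1 := factorial_mul_exp_le i hi
  have h2 := factorial_mul_exp_le (k + i) (by omega)
  push_cast at h2
  have e5 : Real.exp ((i:ℝ)) * Real.exp ((k:ℝ) + i) = Real.exp ((k:ℝ) + 2 * i) := by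
    rw [← Real.exp_add]; ring_nf
  have e6 : Real.exp 1 * Real.exp 1 = Real.exp 2 := by
    rw [← Real.exp_add]; norm_num
  calc (Nat.factorial i : ℝ) * (Nat.factorial (k + i) : ℝ) * Real.exp ((k:ℝ) + 2 * i)
      = ((Nat.factorial i : ℝ) * Real.exp i) * ((Nat.factorial (k + i) : ℝ) * Real.exp ((k:ℝ) + i)) := by
        rw [← e5]; ring
    _ ≤ (Real.exp 1 * (2 * i) * (i : ℝ) ^ i) * (Real.exp 1 * (2 * ((k:ℝ) + i)) * ((k:ℝ) + i) ^ (k + i)) := by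
        apply mul_le_mul h1 h2 (by positivity) (by positivity)
    _ = (Real.exp 1 * Real.exp 1) * (4 * i * ((k:ℝ) + i)) * ((i : ℝ) ^ i * ((k:ℝ) + i) ^ (k + i)) := by
        ring
    _ = 4 * Real.exp 2 * i * ((k:ℝ) + i) * ((i : ℝ) ^ i * ((k : ℝ) + i) ^ (k + i)) := by
        rw [e6]; ring

lemma term_le_exp {a : ℝ} (ha : 0 < a) {k : ℕ} (hk : 1 ≤ k) (i : ℕ) :
    term k i (a * k) ≤ Real.exp ((k : ℝ) * psi a (i / k)) := by
  have hK : (0:ℝ) < (k:ℝ) := by exact_mod_cast hk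
  have hfac : (0:ℝ) < (Nat.factorial i : ℝ) * (Nat.factorial (k+i) : ℝ) := by positivity
  have hE : (0:ℝ) < Real.exp ((k:ℝ) + 2 * i) := Real.exp_pos _
  have key := key_identity ha hk i
  have hb1 := pow_le_factorial_mul_exp i
  have hb2 := pow_le_factorial_mul_exp (k + i)
  push_cast at hb2
  have hprod : (i : ℝ) ^ i * ((k : ℝ) + i) ^ (k + i)
      ≤ (Nat.factorial i : ℝ) * (Nat.factorial (k+i) : ℝ) * Real.exp ((k:ℝ) + 2 * i) := by
    calc (i : ℝ) ^ i * ((k : ℝ) + i) ^ (k + i)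
        ≤ ((Nat.factorial i : ℝ) * Real.exp i) * ((Nat.factorial (k+i) : ℝ) * Real.exp ((k:ℝ) + i)) :=
          mul_le_mul hb1 hb2 (by positivity) (by positivity)
      _ = (Nat.factorial i : ℝ) * (Nat.factorial (k+i) : ℝ) * (Real.exp ((i:ℝ)) * Real.exp ((k:ℝ) + i)) := by
          ring
      _ = _ := by rw [← Real.exp_add]; ring_nf
  unfold term
  rw [div_le_iff₀ hfac]
  have hmain : ((a * k) ^ (k + 2 * i)) * Real.exp ((k:ℝ) + 2 * i)
      ≤ (Real.exp ((k : ℝ) * psi a (i / k)) * ((Nat.factorial i : ℝ) * (Nat.factorial (k+i) : ℝ)))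
        * Real.exp ((k:ℝ) + 2 * i) := by
    calc ((a * k) ^ (k + 2 * i)) * Real.exp ((k:ℝ) + 2 * i)
        = Real.exp ((k : ℝ) * psi a (i / k)) * ((i : ℝ) ^ i * ((k : ℝ) + i) ^ (k + i)) := key
      _ ≤ Real.exp ((k : ℝ) * psi a (i / k))
          * ((Nat.factorial i : ℝ) * (Nat.factorial (k+i) : ℝ) * Real.exp ((k:ℝ) + 2 * i)) := by
          gcongr
      _ = _ := by ring
  exact le_of_mul_le_mul_right hmain hE

lemma exp_le_term {a : ℝ} (ha : 0 < a) {k i : ℕ} (hk : 1 ≤ k) (hi : 1 ≤ i) :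
    Real.exp ((k : ℝ) * psi a (i / k))
      ≤ term k i (a * k) * (4 * Real.exp 2 * i * ((k:ℝ) + i)) := by
  have hK : (0:ℝ) < (k:ℝ) := by exact_mod_cast hk
  have hfac : (0:ℝ) < (Nat.factorial i : ℝ) * (Nat.factorial (k+i) : ℝ) := by positivity
  have hE : (0:ℝ) < Real.exp ((k:ℝ) + 2 * i) := Real.exp_pos _
  have hD : (0:ℝ) < 4 * Real.exp 2 * i * ((k:ℝ) + i) := by
    have : (0:ℝ) < (i:ℝ) := by exact_mod_cast hi
    positivity
  have key := key_identity ha hk i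
  have hmain : (Real.exp ((k : ℝ) * psi a (i / k)) * ((Nat.factorial i : ℝ) * (Nat.factorial (k+i) : ℝ)))
      * Real.exp ((k:ℝ) + 2 * i)
      ≤ ((4 * Real.exp 2 * i * ((k:ℝ) + i)) * ((a * k) ^ (k + 2 * i))) * Real.exp ((k:ℝ) + 2 * i) := by
    calc (Real.exp ((k : ℝ) * psi a (i / k)) * ((Nat.factorial i : ℝ) * (Nat.factorial (k+i) : ℝ)))
          * Real.exp ((k:ℝ) + 2 * i)
        = Real.exp ((k : ℝ) * psi a (i / k))
            * ((Nat.factorial i : ℝ) * (Nat.factorial (k+i) : ℝ) * Real.exp ((k:ℝ) + 2 * i)) := by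
          ring
      _ ≤ Real.exp ((k : ℝ) * psi a (i / k))
            * (4 * Real.exp 2 * i * ((k:ℝ) + i) * ((i : ℝ) ^ i * ((k : ℝ) + i) ^ (k + i))) := by
          exact mul_le_mul_of_nonneg_left (prod_factorial_le hk hi) (Real.exp_pos _).le
      _ = (4 * Real.exp 2 * i * ((k:ℝ) + i))
            * (Real.exp ((k : ℝ) * psi a (i / k)) * ((i : ℝ) ^ i * ((k : ℝ) + i) ^ (k + i))) := by
          ring
      _ = (4 * Real.exp 2 * i * ((k:ℝ) + i)) * (((a * k) ^ (k + 2 * i)) * Real.exp ((k:ℝ) + 2 * i)) := by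
          rw [← key]
      _ = _ := by ring
  have h2 := le_of_mul_le_mul_right hmain hE
  unfold term
  rw [div_mul_eq_mul_div, le_div_iff₀ hfac]
  calc Real.exp ((k : ℝ) * psi a (i / k)) * ((Nat.factorial i : ℝ) * (Nat.factorial (k+i) : ℝ))
      ≤ (4 * Real.exp 2 * i * ((k:ℝ) + i)) * ((a * k) ^ (k + 2 * i)) := h2
    _ = (a * k) ^ (k + 2 * i) * (4 * Real.exp 2 * i * ((k:ℝ) + i)) := by ring

lemma psi_Astar_nonpos {α : ℝ} (hα : 1 < α)
    (hlog : Real.log (α + 1) - Real.log (α - 1) = 2 * α) {s : ℝ} (hs : 0 ≤ s) :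
    psi (Astar α) s ≤ 0 := by
  have h := g_nonneg hα hlog hs
  have : psi (Astar α) s = - g α s := by unfold psi g; ring
  linarith [h, this.le, this.ge]

lemma term_le_q_pow {α a : ℝ} (hα : 1 < α)
    (hlog : Real.log (α + 1) - Real.log (α - 1) = 2 * α)
    (ha : 0 < a) (haA : a < Astar α) {k : ℕ} (hk : 1 ≤ k) (i : ℕ) :
    term k i (a * k) ≤ (a / Astar α) ^ k := by
  have hA := Astar_pos hα
  have hs : (0:ℝ) ≤ (i:ℝ) / k := by positivity
  have hlq : Real.log a - Real.log (Astar α) < 0 := by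
    have := Real.log_lt_log ha haA
    linarith
  have h3 : psi (Astar α) ((i:ℝ) / k) ≤ 0 := psi_Astar_nonpos hα hlog hs
  have h2 : psi a ((i:ℝ) / k) ≤ Real.log a - Real.log (Astar α) := by
    have hps := psi_sub_psi a (Astar α) ((i:ℝ) / k)
    nlinarith [hs, hlq, h3, hps]
  calc term k i (a * k) ≤ Real.exp ((k : ℝ) * psi a (i / k)) := term_le_exp ha hk i
    _ ≤ Real.exp ((k : ℝ) * (Real.log a - Real.log (Astar α))) := by
        apply Real.exp_le_exp.mpr
        apply mul_le_mul_of_nonneg_left h2 (by positivity)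
    _ = (a / Astar α) ^ k := by
        rw [← Real.log_div ha.ne' hA.ne', Real.exp_nat_mul, Real.exp_log (by positivity)]

lemma term_succ (k i : ℕ) (t : ℝ) :
    term k (i + 1) t = term k i t * (t ^ 2 / (((i:ℝ) + 1) * (((k:ℝ) + i) + 1))) := by
  unfold term
  have h1 : k + 2 * (i + 1) = (k + 2 * i) + 2 := by omega
  have h2 : k + (i + 1) = (k + i) + 1 := by omega
  rw [h1, h2, pow_add, Nat.factorial_succ, Nat.factorial_succ, div_mul_div_comm]
  push_cast
  rw [div_eq_div_iff (by positivity) (by positivity)]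
  ring

lemma geom_tail {k N : ℕ} {t : ℝ} (ht : 0 < t) (hN : 2 * t ≤ N) :
    ∀ j : ℕ, term k (N + j) t ≤ term k N t * (1 / 2) ^ j := by
  intro j
  induction j with
  | zero => simp
  | succ n ih =>
    have hstep : term k (N + n + 1) t ≤ term k (N + n) t * (1 / 2) := by
      rw [term_succ]
      apply mul_le_mul_of_nonneg_left _ (term_nonneg ht.le)
      have hNn : (N:ℝ) ≤ ((N + n : ℕ):ℝ) := by
        push_cast; linarith [Nat.cast_nonneg (α := ℝ) n]
      have h1 : 2 * t ≤ (((N + n : ℕ)):ℝ) + 1 := by linarith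
      have h2 : 2 * t ≤ ((k:ℝ) + ((N + n : ℕ):ℝ)) + 1 := by
        linarith [Nat.cast_nonneg (α := ℝ) k]
      rw [div_le_iff₀ (by nlinarith)]
      nlinarith
    have : term k (N + (n + 1)) t = term k (N + n + 1) t := rfl
    rw [this]
    calc term k (N + n + 1) t ≤ term k (N + n) t * (1 / 2) := hstep
      _ ≤ term k N t * (1 / 2) ^ n * (1 / 2) := by
          apply mul_le_mul_of_nonneg_right ih (by norm_num)
      _ = term k N t * (1 / 2) ^ (n + 1) := by ring

lemma mZ_le_poly_mul_q_pow {α a : ℝ} (hα : 1 < α)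
    (hlog : Real.log (α + 1) - Real.log (α - 1) = 2 * α)
    (ha : 0 < a) (haA : a < Astar α) {k : ℕ} (hk : 1 ≤ k) :
    mZ k (a * k) ≤ (2 * a * k + 3) * (a / Astar α) ^ k := by
  have hK : (0:ℝ) < (k:ℝ) := by exact_mod_cast hk
  have ht : (0:ℝ) < a * k := by positivity
  obtain ⟨N, hNt, hNle⟩ : ∃ N : ℕ, 2 * (a * k) ≤ (N:ℝ) ∧ (N:ℝ) ≤ 2 * (a * k) + 1 :=
    ⟨⌈2 * (a * k)⌉₊, Nat.le_ceil _,
      (Nat.ceil_lt_add_one (by positivity : (0:ℝ) ≤ 2 * (a * k))).le⟩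
  have hq : ∀ i : ℕ, term k i (a * k) ≤ (a / Astar α) ^ k :=
    fun i => term_le_q_pow hα hlog ha haA hk i
  have hsum := summable_term k (t := a * k) ht.le
  have hsplit := Summable.sum_add_tsum_nat_add (f := fun i => term k i (a * k)) N hsum
  have htail : ∑' j : ℕ, term k (j + N) (a * k) ≤ 2 * (a / Astar α) ^ k := by
    have hg : ∀ j : ℕ, term k (j + N) (a * k) ≤ term k N (a * k) * (1 / 2) ^ j := by
      intro j
      rw [Nat.add_comm j N]
      exact geom_tail ht hNt j
    calc ∑' j : ℕ, term k (j + N) (a * k)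
        ≤ ∑' j : ℕ, term k N (a * k) * (1 / 2) ^ j := by
          apply Summable.tsum_le_tsum hg ((summable_nat_add_iff N).mpr hsum)
          exact (summable_geometric_of_lt_one (by norm_num) (by norm_num)).mul_left _
      _ = term k N (a * k) * (1 - 1/2)⁻¹ := by
          rw [tsum_mul_left, tsum_geometric_of_lt_one (by norm_num) (by norm_num)]
      _ = term k N (a * k) * 2 := by norm_num
      _ ≤ (a / Astar α) ^ k * 2 := by
          apply mul_le_mul_of_nonneg_right (hq N) (by norm_num)
      _ = 2 * (a / Astar α) ^ k := by ring
  have hhead : ∑ i ∈ Finset.range N, term k i (a * k) ≤ (N:ℝ) * (a / Astar α) ^ k := by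
    calc ∑ i ∈ Finset.range N, term k i (a * k)
        ≤ ∑ _i ∈ Finset.range N, (a / Astar α) ^ k := Finset.sum_le_sum (fun i _ => hq i)
      _ = (N:ℝ) * (a / Astar α) ^ k := by
          rw [Finset.sum_const, Finset.card_range, nsmul_eq_mul]
  have hAq : (0:ℝ) ≤ (a / Astar α) ^ k := by
    have := Astar_pos hα; positivity
  calc mZ k (a * k) = (∑ i ∈ Finset.range N, term k i (a * k))
        + ∑' j : ℕ, term k (j + N) (a * k) := by
        rw [mZ_eq, ← hsplit]
    _ ≤ (N:ℝ) * (a / Astar α) ^ k + 2 * (a / Astar α) ^ k := add_le_add hhead htail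
    _ ≤ (2 * (a * k) + 1) * (a / Astar α) ^ k + 2 * (a / Astar α) ^ k := by
        apply add_le_add_left (mul_le_mul_of_nonneg_right hNle hAq)
    _ = (2 * a * k + 3) * (a / Astar α) ^ k := by ring

/-- Part 2: subcritical decay. -/
lemma mZ_tendsto_zero {α a : ℝ} (hα : 1 < α)
    (hlog : Real.log (α + 1) - Real.log (α - 1) = 2 * α)
    (ha0 : 0 ≤ a) (haA : a < Astar α) :
    Tendsto (fun k : ℕ => mZ k (a * k)) atTop (nhds 0) := by
  rcases eq_or_lt_of_le ha0 with rfl | ha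
  · apply Tendsto.congr' _ (tendsto_const_nhds (x := (0:ℝ)))
    filter_upwards [eventually_ge_atTop 1] with k hk
    rw [zero_mul, mZ_zero hk]
  · have hA := Astar_pos hα
    have hq0 : 0 ≤ a / Astar α := by positivity
    have hq1 : a / Astar α < 1 := (div_lt_one hA).mpr haA
    have habs : |a / Astar α| < 1 := by rw [abs_of_nonneg hq0]; exact hq1
    have hlim : Tendsto (fun k : ℕ => (2 * a * k + 3) * (a / Astar α) ^ k) atTop (nhds 0) := by
      have l1 : Tendsto (fun k : ℕ => (k:ℝ) ^ 1 * (a / Astar α) ^ k) atTop (nhds 0) :=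
        tendsto_pow_const_mul_const_pow_of_abs_lt_one 1 habs
      have l2 : Tendsto (fun k : ℕ => (a / Astar α) ^ k) atTop (nhds 0) :=
        tendsto_pow_atTop_nhds_zero_of_abs_lt_one habs
      have : Tendsto (fun k : ℕ => 2 * a * ((k:ℝ) ^ 1 * (a / Astar α) ^ k)
          + 3 * (a / Astar α) ^ k) atTop (nhds (2 * a * 0 + 3 * 0)) :=
        ((l1.const_mul (2 * a)).add (l2.const_mul 3))
      simp only [mul_zero, add_zero] at this
      apply this.congr
      intro k
      ring
    apply tendsto_of_tendsto_of_tendsto_of_le_of_le' tendsto_const_nhds hlim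
    · filter_upwards with k using mZ_nonneg k (by positivity)
    · filter_upwards [eventually_ge_atTop 1] with k hk
      exact mZ_le_poly_mul_q_pow hα hlog ha haA hk

/-- Part 3: supercritical divergence. -/
lemma mZ_tendsto_atTop {α a : ℝ} (hα : 1 < α)
    (hlog : Real.log (α + 1) - Real.log (α - 1) = 2 * α)
    (haA : Astar α < a) :
    Tendsto (fun k : ℕ => mZ k (a * k)) atTop atTop := by
  have hA := Astar_pos hα
  have ha : 0 < a := hA.trans haA
  set s₀ : ℝ := (α - 1) / 2 with hs₀def
  have hs₀ : 0 < s₀ := by rw [hs₀def]; linarith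
  have hψA : psi (Astar α) s₀ = 0 := by
    have h0 := g_s0 hα hlog
    have heq : psi (Astar α) ((α - 1) / 2) = - g α ((α - 1) / 2) := by unfold psi g; ring
    rw [hs₀def, heq, h0, neg_zero]
  have hc0 : 0 < psi a s₀ := by
    have h := psi_sub_psi a (Astar α) s₀
    have hlt : Real.log (Astar α) < Real.log a := Real.log_lt_log hA haA
    nlinarith [hs₀]
  set c : ℝ := psi a s₀ / 2 with hcdef
  have hc : 0 < c := by rw [hcdef]; linarith
  have hclt : c < psi a s₀ := by rw [hcdef]; linarith
  have hik : Tendsto (fun k : ℕ => ((⌈s₀ * k⌉₊ : ℝ) / k)) atTop (nhds s₀) := by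
    apply tendsto_of_tendsto_of_tendsto_of_le_of_le' (g := fun _ : ℕ => s₀)
      (h := fun k : ℕ => s₀ + 1 / (k:ℝ))
    · exact tendsto_const_nhds
    · have := tendsto_const_nhds (x := s₀) (f := atTop (α := ℕ)) |>.add
        tendsto_one_div_atTop_nhds_zero_nat
      simpa using this
    · filter_upwards [eventually_ge_atTop 1] with k hk
      have hK : (0:ℝ) < (k:ℝ) := by exact_mod_cast hk
      rw [le_div_iff₀ hK]
      exact Nat.le_ceil _
    · filter_upwards [eventually_ge_atTop 1] with k hk
      have hK : (0:ℝ) < (k:ℝ) := by exact_mod_cast hk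
      rw [div_le_iff₀ hK]
      have h1 : ((⌈s₀ * k⌉₊ : ℝ)) ≤ s₀ * k + 1 :=
        (Nat.ceil_lt_add_one (by positivity)).le
      calc ((⌈s₀ * k⌉₊ : ℝ)) ≤ s₀ * k + 1 := h1
        _ ≤ (s₀ + 1 / k) * k := by field_simp; norm_num
  have hψt : Tendsto (fun k : ℕ => psi a ((⌈s₀ * k⌉₊ : ℝ) / k)) atTop (nhds (psi a s₀)) :=
    ((psi_continuous a).tendsto s₀).comp hik
  have hev : ∀ᶠ k : ℕ in atTop, c ≤ psi a ((⌈s₀ * k⌉₊ : ℝ) / k) :=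
    hψt.eventually_const_le hclt
  set C : ℝ := 4 * Real.exp 2 * (s₀ + 1) * (s₀ + 2) with hCdef
  have hC : 0 < C := by rw [hCdef]; positivity
  have hlow : ∀ᶠ k : ℕ in atTop, Real.exp (c * k) / (C * (k:ℝ) ^ 2) ≤ mZ k (a * k) := by
    filter_upwards [hev, eventually_ge_atTop 1] with k hk hk1
    have hK : (0:ℝ) < (k:ℝ) := by exact_mod_cast hk1
    have hK1 : (1:ℝ) ≤ (k:ℝ) := by exact_mod_cast hk1
    have hi1 : 1 ≤ ⌈s₀ * k⌉₊ := Nat.ceil_pos.mpr (by positivity)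
    have hiub : ((⌈s₀ * k⌉₊ : ℕ):ℝ) ≤ s₀ * k + 1 := (Nat.ceil_lt_add_one (by positivity)).le
    have hile : ((⌈s₀ * k⌉₊ : ℕ):ℝ) ≤ (s₀ + 1) * k := by nlinarith
    have hkile : (k:ℝ) + ((⌈s₀ * k⌉₊ : ℕ):ℝ) ≤ (s₀ + 2) * k := by nlinarith
    have h1 : Real.exp (c * k) ≤ Real.exp ((k:ℝ) * psi a ((⌈s₀ * k⌉₊ : ℕ) / k)) := by
      apply Real.exp_le_exp.mpr
      calc c * k = (k:ℝ) * c := by ring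
        _ ≤ (k:ℝ) * psi a ((⌈s₀ * k⌉₊ : ℕ) / k) := by
            apply mul_le_mul_of_nonneg_left hk hK.le
    have h2 := exp_le_term (a := a) ha hk1 hi1
    have hterm_nonneg : 0 ≤ term k ⌈s₀ * k⌉₊ (a * k) := term_nonneg (by positivity)
    have h3 : term k ⌈s₀ * k⌉₊ (a * k) * (4 * Real.exp 2 * ⌈s₀ * k⌉₊ * ((k:ℝ) + ⌈s₀ * k⌉₊))
        ≤ term k ⌈s₀ * k⌉₊ (a * k) * (C * (k:ℝ) ^ 2) := by
      apply mul_le_mul_of_nonneg_left _ hterm_nonneg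
      have hipos : (0:ℝ) ≤ ((⌈s₀ * k⌉₊ : ℕ):ℝ) := Nat.cast_nonneg _
      calc 4 * Real.exp 2 * ((⌈s₀ * k⌉₊ : ℕ):ℝ) * ((k:ℝ) + ⌈s₀ * k⌉₊)
          ≤ 4 * Real.exp 2 * ((s₀ + 1) * k) * ((s₀ + 2) * k) := by
            apply mul_le_mul (mul_le_mul_of_nonneg_left hile (by positivity)) hkile
              (by positivity) (by positivity)
        _ = C * (k:ℝ) ^ 2 := by rw [hCdef]; ring
    rw [div_le_iff₀ (by positivity)]
    calc Real.exp (c * k) ≤ term k ⌈s₀ * k⌉₊ (a * k) * (C * (k:ℝ) ^ 2) :=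
          le_trans (h1.trans h2) h3
      _ ≤ mZ k (a * k) * (C * (k:ℝ) ^ 2) := by
          apply mul_le_mul_of_nonneg_right (term_le_mZ k _ (by positivity)) (by positivity)
  have hLtop : Tendsto (fun k : ℕ => Real.exp (c * k) / (C * (k:ℝ) ^ 2)) atTop atTop := by
    have hbase : Tendsto (fun x : ℝ => Real.exp x / x ^ 2) atTop atTop :=
      Real.tendsto_exp_div_pow_atTop 2
    have hck : Tendsto (fun k : ℕ => c * (k:ℝ)) atTop atTop :=
      Tendsto.const_mul_atTop hc tendsto_natCast_atTop_atTop
    have hcomp : Tendsto (fun k : ℕ => Real.exp (c * k) / (c * (k:ℝ)) ^ 2) atTop atTop :=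
      hbase.comp hck
    have hscaled := Tendsto.const_mul_atTop (show (0:ℝ) < c ^ 2 / C by positivity) hcomp
    apply hscaled.congr'
    filter_upwards [eventually_ge_atTop 1] with k hk
    have hK : (0:ℝ) < (k:ℝ) := by exact_mod_cast hk
    field_simp
  exact tendsto_atTop_mono' atTop hlow hLtop

end MZaux

open MZaux in
/-- Let `t*_k` be the unique `t > 0` with `m_ℤ(0,k,t) = 1`, and let
`α*` be the unique solution in `(1,∞)` of `coth α = α`. Then `t*_k/k → (1/2)√(α*²−1)`
as `k → ∞`; equivalently, for `a ≥ 0`, `m_ℤ(0,k,ak) → 0` if `a < (1/2)√(α*²−1)` and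
`m_ℤ(0,k,ak) → ∞` if `a > (1/2)√(α*²−1)`. -/
theorem critical_time_Z_asymptotics
    (tk : ℕ → ℝ) (htk : ∀ k : ℕ, 1 ≤ k → 0 < tk k ∧ mZ k (tk k) = 1)
    (htkuniq : ∀ k : ℕ, 1 ≤ k → ∀ t : ℝ, 0 < t → mZ k t = 1 → t = tk k)
    (αs : ℝ) (hαs1 : 1 < αs) (hαs : Real.cosh αs / Real.sinh αs = αs) :
    Tendsto (fun k : ℕ => tk k / k) atTop
      (nhds (Real.sqrt (αs ^ 2 - 1) / 2)) ∧
    (∀ a : ℝ, 0 ≤ a → a < Real.sqrt (αs ^ 2 - 1) / 2 →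
      Tendsto (fun k : ℕ => mZ k (a * k)) atTop (nhds 0)) ∧
    (∀ a : ℝ, Real.sqrt (αs ^ 2 - 1) / 2 < a →
      Tendsto (fun k : ℕ => mZ k (a * k)) atTop atTop) := by
  have hsinh : 0 < Real.sinh αs := Real.sinh_pos_iff.mpr (by linarith)
  have hcosh : Real.cosh αs = αs * Real.sinh αs := (div_eq_iff hsinh.ne').mp hαs
  have hE : Real.exp αs ^ 2 * (αs - 1) = αs + 1 := by
    rw [Real.cosh_eq, Real.sinh_eq, Real.exp_neg] at hcosh
    have hEpos := Real.exp_pos αs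
    field_simp at hcosh
    nlinarith [hcosh]
  have hlog : Real.log (αs + 1) - Real.log (αs - 1) = 2 * αs := by
    have h1 : αs + 1 = Real.exp αs ^ 2 * (αs - 1) := hE.symm
    rw [h1, Real.log_mul (by positivity) (by intro h; rw [sub_eq_zero] at h; linarith [h.symm] : αs - 1 ≠ 0),
      Real.log_pow, Real.log_exp]
    push_cast
    ring
  have hAdef : Real.sqrt (αs ^ 2 - 1) / 2 = Astar αs := rfl
  refine ⟨?_, fun a ha0 haA => mZ_tendsto_zero hαs1 hlog ha0 (hAdef ▸ haA),
    fun a haA => mZ_tendsto_atTop hαs1 hlog (hAdef ▸ haA)⟩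
  rw [Metric.tendsto_atTop]
  intro ε hε
  have hA : 0 < Real.sqrt (αs ^ 2 - 1) / 2 := hAdef ▸ Astar_pos hαs1
  set A : ℝ := Real.sqrt (αs ^ 2 - 1) / 2 with hAset
  have hminpos : 0 < min (ε / 2) (A / 2) := lt_min (by linarith) (by linarith)
  have ha₁pos : 0 < A - min (ε / 2) (A / 2) := by
    have := min_le_right (ε / 2) (A / 2)
    linarith
  have ha₁lt : A - min (ε / 2) (A / 2) < A := by linarith
  have h₁ := mZ_tendsto_zero hαs1 hlog ha₁pos.le (by rw [← hAdef]; exact ha₁lt)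
  have h₂ := mZ_tendsto_atTop hαs1 hlog
    (show Astar αs < A + ε / 2 by rw [← hAdef]; linarith)
  have hev1 : ∀ᶠ k : ℕ in atTop, mZ k ((A - min (ε / 2) (A / 2)) * k) < 1 :=
    h₁.eventually_lt_const (by norm_num : (0:ℝ) < 1)
  have hev2 : ∀ᶠ k : ℕ in atTop, 1 < mZ k ((A + ε / 2) * k) :=
    h₂.eventually_gt_atTop 1
  obtain ⟨N, hN⟩ := eventually_atTop.mp ((hev1.and hev2).and (eventually_ge_atTop 1))
  refine ⟨N, fun k hk => ?_⟩
  obtain ⟨⟨h1k, h2k⟩, hk1⟩ := hN k hk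
  have hK : (0:ℝ) < (k:ℝ) := by exact_mod_cast hk1
  obtain ⟨htkpos, htkeq⟩ := htk k hk1
  have hlo : (A - min (ε / 2) (A / 2)) * k < tk k := by
    by_contra hcon
    push_neg at hcon
    have := mZ_mono k htkpos.le hcon
    rw [htkeq] at this
    linarith
  have hhi : tk k < (A + ε / 2) * k := by
    by_contra hcon
    push_neg at hcon
    have := mZ_mono k (by positivity) hcon
    rw [htkeq] at this
    linarith
  rw [Real.dist_eq, abs_sub_lt_iff]
  constructor
  · have : tk k / k < A + ε / 2 := by
      rw [div_lt_iff₀ hK]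
      linarith
    linarith
  · have h5 : A - min (ε / 2) (A / 2) < tk k / k := by
      rw [lt_div_iff₀ hK]
      linarith
    have h6 := min_le_left (ε / 2) (A / 2)
    linarith
end

section
/- Let T(n,1) denote the first-passage time between two vertices at Hamming distance 1 in the hypercube K₂^n, with i.i.d. Exp(1) edge weights. Then E[T(n,1)] = O(n^{−1/3}); that is, there is a constant C > 0 such that E[T(n,1)] ≤ C·n^{−1/3} for all n ≥ 1. -/
open MeasureTheory ProbabilityTheory Filter
open scoped ProbabilityTheory ENNReal

namespace FPP

variable {V : Type*}

/-- `G` has all vertex degrees bounded by `D`. -/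
def BoundedDegreeBy (G : SimpleGraph V) (D : ℕ) : Prop :=
  ∀ x : V, (G.neighborSet x).Finite ∧ (G.neighborSet x).ncard ≤ D

/-- The path-generating function `m_G(v,w,t) = Σ_γ t^{|γ|}/|γ|!`,
summing over all walks from `v` to `w` in `G`. -/
noncomputable def genFun (G : SimpleGraph V) (v w : V) (t : ℝ) : ℝ :=
  ∑' γ : G.Walk v w, t ^ γ.length / (Nat.factorial γ.length)

/-- The passage time of a walk, given edge weights `ω` (edges counted with multiplicity). -/
noncomputable def walkTime (G : SimpleGraph V) (ω : G.edgeSet → ℝ) {v w : V}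
    (γ : G.Walk v w) : ℝ :=
  (γ.darts.map (fun d => ω ⟨d.edge, d.edge_mem⟩)).sum

/-- The first-passage time between `v` and `w`, given edge weights `ω`:
the infimum of walk passage times over all walks from `v` to `w`. -/
noncomputable def fppTime (G : SimpleGraph V) (ω : G.edgeSet → ℝ) (v w : V) : ℝ :=
  ⨅ γ : G.Walk v w, walkTime G ω γ

/-- The function `f_G^{vw}(s,t)` (the critical time `tstar` is given as a parameter);
note that `Real.log 0 = 0` in Lean, so terms `0 · ln 0` are interpreted as `0`. -/
noncomputable def fFun (G : SimpleGraph V) (v w : V) (tstar s t : ℝ) : ℝ :=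
  ∑' p : V × V, genFun G v p.1 s * genFun G p.1 p.2 t *
    genFun G p.2 w (tstar - s - t) * Real.log (genFun G p.1 p.2 t)

/-- The `n`-fold Cartesian (box) power of a simple graph: vertices are `n`-tuples,
adjacent iff they agree in all but one coordinate and are adjacent in that coordinate. -/
def cartPower (G : SimpleGraph V) (n : ℕ) : SimpleGraph (Fin n → V) where
  Adj x y := ∃ i, G.Adj (x i) (y i) ∧ ∀ j, j ≠ i → x j = y j
  symm := by
    constructor
    rintro x y ⟨i, h, hj⟩
    exact ⟨i, h.symm, fun j hji => (hj j hji).symm⟩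
  loopless := by
    constructor
    rintro x ⟨i, h, -⟩
    exact G.loopless.irrefl _ h

/-! ### Auxiliary material -/

open Set

section Aux

/-- Measurability of a finite infimum. -/
lemma measurable_finset_inf' {ι δ : Type*} [MeasurableSpace δ] (s : Finset ι) (hs : s.Nonempty)
    (f : ι → δ → ℝ) (hf : ∀ i, Measurable (f i)) :
    Measurable (fun ω => s.inf' hs (fun i => f i ω)) := by
  induction hs using Finset.Nonempty.cons_induction with
  | singleton a => simpa using hf a
  | cons a s ha hs ih =>
    simp only [Finset.inf'_cons hs]
    exact (hf a).min ih

lemma expMeasure_Iic {x : ℝ} (hx : 0 ≤ x) :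
    expMeasure 1 (Iic x) = ENNReal.ofReal (1 - Real.exp (-x)) := by
  rw [expMeasure, gammaMeasure, withDensity_apply _ measurableSet_Iic]
  have h := lintegral_exponentialPDF_eq_antiDeriv one_pos x
  rw [if_pos hx, one_mul] at h
  exact h

lemma expMeasure_Iio_zero : expMeasure 1 (Iio 0) = 0 := by
  rw [expMeasure, gammaMeasure, withDensity_apply _ measurableSet_Iio]
  exact lintegral_exponentialPDF_of_nonpos le_rfl

lemma expMeasure_Ioi {x : ℝ} (hx : 0 ≤ x) :
    expMeasure 1 (Ioi x) = ENNReal.ofReal (Real.exp (-x)) := by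
  have hP : IsProbabilityMeasure (expMeasure 1) := isProbabilityMeasure_expMeasure one_pos
  have h := prob_compl_eq_one_sub (μ := expMeasure 1) measurableSet_Iic (s := Iic x)
  rw [compl_Iic] at h
  rw [h, expMeasure_Iic hx, ← ENNReal.ofReal_one, ← ENNReal.ofReal_sub]
  · norm_num
  · nlinarith [Real.exp_pos (-x), Real.exp_le_one_iff.mpr (neg_nonpos.mpr hx)]

/-- Lebesgue integral of a decaying exponential. -/
lemma lint_exp_Ioi {b : ℝ} (hb : 0 < b) (a : ℝ) (K : ℝ) (hK : 0 ≤ K) :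
    ∫⁻ t in Set.Ioi a, ENNReal.ofReal (K * Real.exp (-(b * t)))
      = ENNReal.ofReal (K * Real.exp (-(b * a)) / b) := by
  rw [← MeasureTheory.ofReal_integral_eq_lintegral_ofReal]
  · congr 1
    rw [MeasureTheory.integral_const_mul]
    have h3 : ∫ t in Set.Ioi a, Real.exp (-(b * t))
        = b⁻¹ • ∫ x in Set.Ioi (b * a), Real.exp (-x) := by
      rw [← MeasureTheory.integral_comp_mul_left_Ioi (fun x => Real.exp (-x)) a hb]
    rw [h3, integral_exp_neg_Ioi, smul_eq_mul]
    ring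
  · have h := (exp_neg_integrableOn_Ioi a hb).const_mul K
    simpa [neg_mul] using h
  · filter_upwards with x
    positivity

/-- Grouped events over disjoint triples of independent random variables are independent. -/
lemma groups_indep {Ω ι κ : Type*} [MeasurableSpace Ω] {μ : Measure Ω}
    [IsProbabilityMeasure μ] [DecidableEq ι] [DecidableEq κ] (f : ι → Ω → ℝ)
    (hf : iIndepFun (β := fun _ => ℝ) (m := fun _ => Real.measurableSpace) f μ) (hmeas : ∀ i, Measurable (f i))
    (e : κ → Fin 3 → ι) (hinj : Function.Injective (fun p : κ × Fin 3 => e p.1 p.2))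
    (B : κ → Set (Fin 3 → ℝ)) (hB : ∀ j, MeasurableSet (B j)) (s : Finset κ) :
    μ (⋂ j ∈ s, (fun ω k => f (e j k) ω) ⁻¹' (B j))
      = ∏ j ∈ s, μ ((fun ω k => f (e j k) ω) ⁻¹' (B j)) := by
  classical
  induction s using Finset.induction_on with
  | empty => simp
  | @insert a s ha ih =>
    rw [Finset.set_biInter_insert, Finset.prod_insert ha, ← ih]
    set Sa : Finset ι := Finset.image (e a) Finset.univ with hSa
    set Ts : Finset ι := s.biUnion (fun j => Finset.image (e j) Finset.univ) with hTs
    have hdisj : Disjoint Sa Ts := by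
      rw [Finset.disjoint_left]
      rintro i hi hi'
      simp only [hSa, hTs, Finset.mem_image, Finset.mem_biUnion, Finset.mem_univ,
        true_and] at hi hi'
      obtain ⟨k, rfl⟩ := hi
      obtain ⟨j, hj, k', hk'⟩ := hi'
      have hjk : (j, k') = (a, k) := hinj hk'
      simp only [Prod.mk.injEq] at hjk
      exact ha (hjk.1 ▸ hj)
    have hIndep := hf.indepFun_finset Sa Ts hdisj hmeas
    have hmemSa : ∀ k, e a k ∈ Sa := fun k => Finset.mem_image_of_mem _ (Finset.mem_univ k)
    have hmemTs : ∀ j ∈ s, ∀ k, e j k ∈ Ts := fun j hj k =>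
      Finset.mem_biUnion.mpr ⟨j, hj, Finset.mem_image_of_mem _ (Finset.mem_univ k)⟩
    set φa : ((i : Sa) → ℝ) → (Fin 3 → ℝ) := fun v k => v ⟨e a k, hmemSa k⟩ with hφa
    have hφameas : Measurable φa :=
      measurable_pi_lambda _ (fun k => measurable_pi_apply _)
    set ψ : κ → ((i : Ts) → ℝ) → (Fin 3 → ℝ) :=
      fun j v k => if h : e j k ∈ Ts then v ⟨e j k, h⟩ else 0 with hψ
    have hψmeas : ∀ j, Measurable (ψ j) := by
      intro j
      refine measurable_pi_lambda _ (fun k => ?_)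
      simp only [hψ]
      split_ifs with h
      · exact measurable_pi_apply _
      · exact measurable_const
    have hA : ((fun ω (k : Fin 3) => f (e a k) ω) ⁻¹' (B a))
        = (fun ω (i : Sa) => f i ω) ⁻¹' (φa ⁻¹' (B a)) := rfl
    have hrest : (⋂ j ∈ s, (fun ω (k : Fin 3) => f (e j k) ω) ⁻¹' (B j))
        = (fun ω (i : Ts) => f i ω) ⁻¹' (⋂ j ∈ s, (ψ j) ⁻¹' (B j)) := by
      rw [Set.preimage_iInter₂]
      refine Set.iInter₂_congr (fun j hj => ?_)
      have hc : (fun ω => ψ j (fun (i : Ts) => f i ω)) = (fun ω (k : Fin 3) => f (e j k) ω) := by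
        funext ω k
        simp only [hψ, dif_pos (hmemTs j hj k)]
      rw [← hc]
      rfl
    rw [hA, hrest]
    rw [hIndep.measure_inter_preimage_eq_mul _ _ (hφameas (hB a))
      (Finset.measurableSet_biInter s (fun j hj => (hψmeas j) (hB j)))]

/-! ### The hypercube, and the canonical short paths -/

abbrev HQ (n : ℕ) : SimpleGraph (Fin n → Bool) := cartPower (⊤ : SimpleGraph Bool) n

def vv0 (n : ℕ) : Fin n → Bool := fun _ => false
def ww0 (n : ℕ) : Fin n → Bool := fun i => decide (i.val = 0)
def vA (n : ℕ) (j : Fin (n-1)) : Fin n → Bool := fun i => decide (i.val = j.val + 1)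
def vB (n : ℕ) (j : Fin (n-1)) : Fin n → Bool := fun i => decide (i.val = j.val + 1 ∨ i.val = 0)

lemma adj_v0_w0 {n : ℕ} (h : 1 ≤ n) : (HQ n).Adj (vv0 n) (ww0 n) := by
  refine ⟨⟨0, h⟩, ?_, ?_⟩
  · simp [vv0, ww0]
  · intro k hk
    have : k.val ≠ 0 := fun hc => hk (Fin.ext hc)
    simp [vv0, ww0, this]

lemma adj1 {n : ℕ} (j : Fin (n-1)) : (HQ n).Adj (vv0 n) (vA n j) := by
  have hj : j.val + 1 < n := by have := j.isLt; omega
  refine ⟨⟨j.val + 1, hj⟩, ?_, ?_⟩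
  · simp [vv0, vA]
  · intro k hk
    have : k.val ≠ j.val + 1 := fun hc => hk (Fin.ext hc)
    simp [vv0, vA, this]

lemma adj2 {n : ℕ} (j : Fin (n-1)) : (HQ n).Adj (vA n j) (vB n j) := by
  have h0 : 0 < n := by have := j.isLt; omega
  refine ⟨⟨0, h0⟩, ?_, ?_⟩
  · simp [vA, vB]
  · intro k hk
    have : k.val ≠ 0 := fun hc => hk (Fin.ext hc)
    simp [vA, vB, this]

lemma adj3 {n : ℕ} (j : Fin (n-1)) : (HQ n).Adj (vB n j) (ww0 n) := by
  have hj : j.val + 1 < n := by have := j.isLt; omega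
  refine ⟨⟨j.val + 1, hj⟩, ?_, ?_⟩
  · simp [vB, ww0]
  · intro k hk
    have : k.val ≠ j.val + 1 := fun hc => hk (Fin.ext hc)
    simp [vB, ww0, this]

def pathJ {n : ℕ} (j : Fin (n-1)) : (HQ n).Walk (vv0 n) (ww0 n) :=
  .cons (adj1 j) (.cons (adj2 j) (.cons (adj3 j) .nil))

def E1 {n : ℕ} (j : Fin (n-1)) : (HQ n).edgeSet := ⟨s(vv0 n, vA n j), adj1 j⟩
def E2 {n : ℕ} (j : Fin (n-1)) : (HQ n).edgeSet := ⟨s(vA n j, vB n j), adj2 j⟩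
def E3 {n : ℕ} (j : Fin (n-1)) : (HQ n).edgeSet := ⟨s(vB n j, ww0 n), adj3 j⟩

def edgeOf {n : ℕ} (j : Fin (n-1)) : Fin 3 → (HQ n).edgeSet := ![E1 j, E2 j, E3 j]

lemma edgeOf_mk0 {n : ℕ} (j : Fin (n-1)) (h : 0 < 3) : edgeOf j ⟨0, h⟩ = E1 j := rfl
lemma edgeOf_mk1 {n : ℕ} (j : Fin (n-1)) (h : 1 < 3) : edgeOf j ⟨1, h⟩ = E2 j := rfl
lemma edgeOf_mk2 {n : ℕ} (j : Fin (n-1)) (h : 2 < 3) : edgeOf j ⟨2, h⟩ = E3 j := rfl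

lemma edgeOf_zero {n : ℕ} (j : Fin (n-1)) : edgeOf j 0 = E1 j := rfl
lemma edgeOf_one {n : ℕ} (j : Fin (n-1)) : edgeOf j 1 = E2 j := rfl
lemma edgeOf_two {n : ℕ} (j : Fin (n-1)) : edgeOf j 2 = E3 j := rfl

lemma walkTime_pathJ {n : ℕ} (ω : (HQ n).edgeSet → ℝ) (j : Fin (n-1)) :
    walkTime (HQ n) ω (pathJ j) = ω (E1 j) + ω (E2 j) + ω (E3 j) := by
  simp [walkTime, pathJ, SimpleGraph.Walk.darts_cons, SimpleGraph.Walk.darts_nil,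
    SimpleGraph.Dart.edge, E1, E2, E3]
  ring

section vert
variable {n : ℕ} (j j' : Fin (n-1))

lemma finj (j : Fin (n-1)) : j.val + 1 < n := by have := j.isLt; omega
lemma npos (j : Fin (n-1)) : 0 < n := by have := j.isLt; omega

lemma vA_inj (h : vA n j = vA n j') : j = j' := by
  have := congrFun h ⟨j.val+1, finj j⟩
  simp [vA] at this
  omega

lemma vB_inj (h : vB n j = vB n j') : j = j' := by
  have := congrFun h ⟨j.val+1, finj j⟩
  simp [vA, vB] at this
  omega

lemma v0_ne_vA : vv0 n ≠ vA n j := by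
  intro h; have := congrFun h ⟨j.val+1, finj j⟩; simp [vv0, vA] at this

lemma v0_ne_vB : vv0 n ≠ vB n j := by
  intro h; have := congrFun h ⟨j.val+1, finj j⟩; simp [vv0, vB] at this

lemma v0_ne_w0 (h0 : 0 < n) : vv0 n ≠ ww0 n := by
  intro h; have := congrFun h ⟨0, h0⟩; simp [vv0, ww0] at this

lemma vA_ne_vB : vA n j ≠ vB n j' := by
  intro h; have := congrFun h ⟨0, npos j⟩; simp [vA, vB] at this

lemma vA_ne_w0 : vA n j ≠ ww0 n := by
  intro h; have := congrFun h ⟨j.val+1, finj j⟩; simp [vA, ww0] at this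

lemma vB_ne_w0 : vB n j ≠ ww0 n := by
  intro h; have := congrFun h ⟨j.val+1, finj j⟩; simp [vB, ww0] at this

end vert

lemma edgeOf_inj {n : ℕ} : Function.Injective (fun p : Fin (n-1) × Fin 3 => edgeOf p.1 p.2) := by
  rintro ⟨j, k⟩ ⟨j', k'⟩ h
  simp only at h
  fin_cases k <;> fin_cases k' <;>
    simp only [edgeOf_mk0, edgeOf_mk1, edgeOf_mk2, E1, E2, E3, Subtype.mk.injEq,
      Sym2.eq_iff] at h
  all_goals simp only [Subtype.ext_iff, Sym2.eq_iff] at h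
  · rcases h with ⟨-, h⟩ | ⟨h, -⟩
    · exact Prod.ext (vA_inj _ _ h) rfl
    · exact absurd h (v0_ne_vA _)
  · rcases h with ⟨h, -⟩ | ⟨h, -⟩
    · exact absurd h (v0_ne_vA _)
    · exact absurd h (v0_ne_vB _)
  · rcases h with ⟨h, -⟩ | ⟨h, -⟩
    · exact absurd h (v0_ne_vB _)
    · exact absurd h (v0_ne_w0 (npos j))
  · rcases h with ⟨h, -⟩ | ⟨-, h⟩
    · exact absurd h.symm (v0_ne_vA _)
    · exact absurd h.symm (v0_ne_vB _)
  · rcases h with ⟨h, -⟩ | ⟨h, -⟩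
    · exact Prod.ext (vA_inj _ _ h) rfl
    · exact absurd h (vA_ne_vB _ _)
  · rcases h with ⟨h, -⟩ | ⟨h, -⟩
    · exact absurd h (vA_ne_vB _ _)
    · exact absurd h (vA_ne_w0 _)
  · rcases h with ⟨h, -⟩ | ⟨-, h⟩
    · exact absurd h.symm (v0_ne_vB _)
    · exact absurd h.symm (v0_ne_w0 (npos j))
  · rcases h with ⟨h, -⟩ | ⟨-, h⟩
    · exact absurd h.symm (vA_ne_vB _ _)
    · exact absurd h.symm (vA_ne_w0 _)
  · rcases h with ⟨h, -⟩ | ⟨h, -⟩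
    · exact Prod.ext (vB_inj _ _ h) rfl
    · exact absurd h (vB_ne_w0 _)

/-! ### The function `qF` and its estimates -/

noncomputable def qF (s : ℝ) : ℝ := 1 - (1 - Real.exp (-(s/3)))^3

lemma qF_nonneg {s : ℝ} (hs : 0 ≤ s) : 0 ≤ qF s := by
  have h1 : Real.exp (-(s/3)) ≤ 1 := Real.exp_le_one_iff.mpr (by linarith)
  have h2 : 0 < Real.exp (-(s/3)) := Real.exp_pos _
  have h3 : (1 - Real.exp (-(s/3)))^3 ≤ 1 := pow_le_one₀ (by linarith) (by linarith)
  simpa [qF] using h3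

lemma qF_le_one {s : ℝ} (hs : 0 ≤ s) : qF s ≤ 1 := by
  have h1 : Real.exp (-(s/3)) ≤ 1 := Real.exp_le_one_iff.mpr (by linarith)
  have h3 : 0 ≤ (1 - Real.exp (-(s/3)))^3 := pow_nonneg (by linarith) 3
  simp only [qF]; linarith

lemma qF_le_exp {s : ℝ} (hs : 0 ≤ s) : qF s ≤ 3 * Real.exp (-(s/3)) := by
  have h1 : Real.exp (-(s/3)) ≤ 1 := Real.exp_le_one_iff.mpr (by linarith)
  have h2 : 0 < Real.exp (-(s/3)) := Real.exp_pos _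
  simp only [qF]
  nlinarith [sq_nonneg (Real.exp (-(s/3)))]

lemma qF_le_cube {s : ℝ} (hs : 0 ≤ s) (hs3 : s ≤ 3) : qF s ≤ Real.exp (-(s^3/216)) := by
  have h2 : 0 < Real.exp (s/3) := Real.exp_pos _
  have hexp : Real.exp (-(s/3)) ≤ 1 - s/6 := by
    have h1 : s/3 + 1 ≤ Real.exp (s/3) := Real.add_one_le_exp _
    rw [Real.exp_neg, inv_le_iff_one_le_mul₀ h2]
    nlinarith
  have h3 : s/6 ≤ 1 - Real.exp (-(s/3)) := by linarith
  have h4 : (s/6)^3 ≤ (1 - Real.exp (-(s/3)))^3 :=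
    pow_le_pow_left₀ (by positivity) h3 3
  have h5 : qF s ≤ 1 - s^3/216 := by
    simp only [qF]
    nlinarith
  have h6 : 1 - s^3/216 ≤ Real.exp (-(s^3/216)) := by
    have := Real.add_one_le_exp (-(s^3/216))
    linarith
  linarith

lemma cube_amgm {d t : ℝ} (hd : 0 ≤ d) (ht : 0 ≤ t) : d * t ≤ d^3 * t^3 + 1 := by
  have hx : 0 ≤ d * t := mul_nonneg hd ht
  have key : ∀ x : ℝ, 0 ≤ x → x ≤ x^3 + 1 := by
    intro x hxx
    nlinarith [mul_nonneg hxx (sq_nonneg (x-1)), sq_nonneg (2*x-1)]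
  have := key _ hx
  nlinarith

/-! ### Reduction to a tail-probability integral -/

lemma walkTime_nonneg {n : ℕ} (ω : (HQ n).edgeSet → ℝ) (hω : ∀ e, 0 ≤ ω e)
    {v w : Fin n → Bool} (γ : (HQ n).Walk v w) : 0 ≤ walkTime (HQ n) ω γ := by
  refine List.sum_nonneg (fun x hx => ?_)
  obtain ⟨d, -, rfl⟩ := List.mem_map.mp hx
  exact hω _

lemma fpp_le_walkTime {n : ℕ} (ω : (HQ n).edgeSet → ℝ) (hω : ∀ e, 0 ≤ ω e)
    {v w : Fin n → Bool} (γ : (HQ n).Walk v w) :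
    fppTime (HQ n) ω v w ≤ walkTime (HQ n) ω γ :=
  ciInf_le ⟨0, by rintro x ⟨γ', rfl⟩; exact walkTime_nonneg ω hω γ'⟩ γ

lemma fpp_lint_le {n : ℕ} {Ωn : Type*} [MeasureSpace Ωn]
    [IsProbabilityMeasure (ℙ : Measure Ωn)]
    (T : (HQ n).edgeSet → Ωn → ℝ) (hmeas : ∀ e, Measurable (T e))
    (hdist : ∀ e, Measure.map (T e) ℙ = expMeasure 1)
    (M : Ωn → ℝ) (hM : Measurable M)
    (h2 : ∀ ω, (∀ e, 0 ≤ T e ω) →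
      0 ≤ M ω ∧ fppTime (HQ n) (fun e => T e ω) (vv0 n) (ww0 n) ≤ M ω) :
    ∫⁻ ω, ENNReal.ofReal (fppTime (HQ n) (fun e => T e ω) (vv0 n) (ww0 n)) ∂ℙ
      ≤ ∫⁻ t in Ioi (0:ℝ), (ℙ : Measure Ωn) {ω | t < M ω} := by
  have hae : ∀ᵐ ω ∂(ℙ : Measure Ωn), ∀ e, 0 ≤ T e ω := by
    rw [MeasureTheory.ae_all_iff]
    intro e
    refine (MeasureTheory.ae_iff).mpr ?_
    have hset : {ω | ¬ 0 ≤ T e ω} = (T e) ⁻¹' (Iio 0) := by ext ω; simp [not_le]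
    rw [hset, ← Measure.map_apply (hmeas e) measurableSet_Iio, hdist e, expMeasure_Iio_zero]
  have step : ∫⁻ ω, ENNReal.ofReal (fppTime (HQ n) (fun e => T e ω) (vv0 n) (ww0 n)) ∂ℙ
      ≤ ∫⁻ ω, ENNReal.ofReal (M ω) ∂ℙ := by
    refine lintegral_mono_ae ?_
    filter_upwards [hae] with ω hω
    exact ENNReal.ofReal_le_ofReal (h2 ω hω).2
  refine step.trans (le_of_eq ?_)
  refine lintegral_eq_lintegral_meas_lt ℙ ?_ hM.aemeasurable
  filter_upwards [hae] with ω hω using (h2 ω hω).1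

/-! ### Tail bound for a single three-edge path -/

lemma tail_single {n : ℕ} {Ωn : Type*} [MeasureSpace Ωn]
    [IsProbabilityMeasure (ℙ : Measure Ωn)]
    (T : (HQ n).edgeSet → Ωn → ℝ) (hmeas : ∀ e, Measurable (T e))
    (hindep : iIndepFun (β := fun _ => ℝ) (m := fun _ => Real.measurableSpace) T ℙ)
    (hdist : ∀ e, Measure.map (T e) ℙ = expMeasure 1)
    (j : Fin (n-1)) {s' : ℝ} (hs' : 0 ≤ s') :
    (ℙ : Measure Ωn) ((fun ω (k : Fin 3) => T (edgeOf j k) ω) ⁻¹'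
        {v : Fin 3 → ℝ | s' < v 0 + v 1 + v 2})
      ≤ ENNReal.ofReal (qF s') := by
  classical
  set S : Finset ((HQ n).edgeSet) := Finset.image (edgeOf j) Finset.univ with hS
  set D : Set Ωn := ⋂ i ∈ S, (T i) ⁻¹' (Iic (s'/3)) with hD
  have hDmeas : MeasurableSet D :=
    Finset.measurableSet_biInter S (fun i _ => (hmeas i) measurableSet_Iic)
  have hsub : ((fun ω (k : Fin 3) => T (edgeOf j k) ω) ⁻¹'
      {v : Fin 3 → ℝ | s' < v 0 + v 1 + v 2}) ⊆ Dᶜ := by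
    intro ω hω hDmem
    simp only [hD, Set.mem_iInter] at hDmem
    have hk : ∀ k : Fin 3, T (edgeOf j k) ω ≤ s'/3 := fun k =>
      hDmem (edgeOf j k) (Finset.mem_image_of_mem _ (Finset.mem_univ k))
    simp only [Set.mem_preimage, Set.mem_setOf_eq] at hω
    have := hk 0
    have := hk 1
    have := hk 2
    linarith [hk 0, hk 1, hk 2]
  refine (measure_mono hsub).trans ?_
  rw [prob_compl_eq_one_sub hDmeas]
  have hprodD : (ℙ : Measure Ωn) D = ∏ i ∈ S, (ℙ : Measure Ωn) ((T i) ⁻¹' (Iic (s'/3))) := by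
    exact hindep.meas_biInter (fun i _ => ⟨Iic (s'/3), measurableSet_Iic, rfl⟩)
  have hsingle : ∀ i : (HQ n).edgeSet, (ℙ : Measure Ωn) ((T i) ⁻¹' (Iic (s'/3)))
      = ENNReal.ofReal (1 - Real.exp (-(s'/3))) := by
    intro i
    rw [← Measure.map_apply (hmeas i) measurableSet_Iic, hdist i,
      expMeasure_Iic (by positivity)]
  have hexple : Real.exp (-(s'/3)) ≤ 1 := Real.exp_le_one_iff.mpr (by linarith)
  have hexppos : 0 < Real.exp (-(s'/3)) := Real.exp_pos _
  have hF0 : 0 ≤ 1 - Real.exp (-(s'/3)) := by linarith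
  have hF3nn : 0 ≤ (1 - Real.exp (-(s'/3)))^3 := pow_nonneg hF0 3
  have hinjk : ∀ k ∈ (Finset.univ : Finset (Fin 3)), ∀ k' ∈ (Finset.univ : Finset (Fin 3)),
      edgeOf j k = edgeOf j k' → k = k' := by
    intro k _ k' _ hkk
    have : ((j, k) : Fin (n-1) × Fin 3) = (j, k') := edgeOf_inj hkk
    exact (Prod.ext_iff.mp this).2
  have hprodval : (ℙ : Measure Ωn) D = ENNReal.ofReal ((1 - Real.exp (-(s'/3)))^3) := by
    rw [hprodD, hS, Finset.prod_image hinjk]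
    have : ∀ k ∈ (Finset.univ : Finset (Fin 3)),
        (ℙ : Measure Ωn) ((T (edgeOf j k)) ⁻¹' (Iic (s'/3)))
          = ENNReal.ofReal (1 - Real.exp (-(s'/3))) := fun k _ => hsingle _
    rw [Finset.prod_congr rfl this, Finset.prod_const, Finset.card_univ, Fintype.card_fin]
    rw [← ENNReal.ofReal_pow hF0]
  rw [hprodval, show (1 : ℝ≥0∞) = ENNReal.ofReal 1 from ENNReal.ofReal_one.symm,
    ← ENNReal.ofReal_sub _ hF3nn]
  exact le_of_eq (by simp [qF])

/-! ### Main estimate for `n ≥ 2` -/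

lemma main2 {n : ℕ} (hn : 2 ≤ n) {Ωn : Type*} [MeasureSpace Ωn]
    [IsProbabilityMeasure (ℙ : Measure Ωn)]
    (T : (HQ n).edgeSet → Ωn → ℝ) (hmeas : ∀ e, Measurable (T e))
    (hindep : iIndepFun (β := fun _ => ℝ) (m := fun _ => Real.measurableSpace) T ℙ)
    (hdist : ∀ e, Measure.map (T e) ℙ = expMeasure 1) :
    ∫⁻ ω, ENNReal.ofReal (fppTime (HQ n) (fun e => T e ω) (vv0 n) (ww0 n)) ∂ℙ
      ≤ ∫⁻ t in Ioi (0:ℝ), ENNReal.ofReal (qF t * qF (min t 3) ^ (n-2)) := by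
  classical
  have hm : 0 < n - 1 := by omega
  set X : Fin (n-1) → Ωn → ℝ := fun j ω => T (E1 j) ω + T (E2 j) ω + T (E3 j) ω with hX
  have hXmeas : ∀ j, Measurable (X j) := fun j => ((hmeas _).add (hmeas _)).add (hmeas _)
  have hne : (Finset.univ : Finset (Fin (n-1))).Nonempty := ⟨⟨0, hm⟩, Finset.mem_univ _⟩
  set M : Ωn → ℝ := fun ω => Finset.univ.inf' hne (fun j => X j ω) with hM
  have hMmeas : Measurable M := measurable_finset_inf' _ hne X hXmeas
  have step1 : ∫⁻ ω, ENNReal.ofReal (fppTime (HQ n) (fun e => T e ω) (vv0 n) (ww0 n)) ∂ℙ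
      ≤ ∫⁻ t in Ioi (0:ℝ), (ℙ : Measure Ωn) {ω | t < M ω} := by
    refine fpp_lint_le T hmeas hdist M hMmeas (fun ω hω => ⟨?_, ?_⟩)
    · refine Finset.le_inf' hne _ (fun j _ => ?_)
      exact add_nonneg (add_nonneg (hω _) (hω _)) (hω _)
    · refine Finset.le_inf' hne _ (fun j _ => ?_)
      have h := fpp_le_walkTime (fun e => T e ω) hω (pathJ j)
      rw [walkTime_pathJ] at h
      exact h
  refine step1.trans ?_
  have hqFm : Measurable qF := by
    have : Continuous qF := by unfold qF; continuity
    exact this.measurable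
  refine setLIntegral_mono (ENNReal.measurable_ofReal.comp
    (hqFm.mul ((hqFm.comp (measurable_id.min measurable_const)).pow_const _))) ?_
  intro t ht
  rw [Set.mem_Ioi] at ht
  set j0 : Fin (n-1) := ⟨0, hm⟩ with hj0
  set τ : Fin (n-1) → ℝ := fun j => if j = j0 then t else min t 3 with hτ
  have hτnn : ∀ j, 0 ≤ τ j := by
    intro j
    simp only [hτ]
    split_ifs
    · exact ht.le
    · exact le_min ht.le (by norm_num)
  have hτle : ∀ j, τ j ≤ t := by
    intro j
    simp only [hτ]
    split_ifs
    · exact le_rfl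
    · exact min_le_left _ _
  set B : Fin (n-1) → Set (Fin 3 → ℝ) := fun j => {v | τ j < v 0 + v 1 + v 2} with hB
  have hBmeas : ∀ j, MeasurableSet (B j) := by
    intro j
    have : Measurable (fun v : Fin 3 → ℝ => v 0 + v 1 + v 2) := by fun_prop
    exact measurableSet_lt measurable_const this
  have hsub : {ω | t < M ω} ⊆
      ⋂ j ∈ (Finset.univ : Finset (Fin (n-1))), (fun ω (k : Fin 3) => T (edgeOf j k) ω) ⁻¹' (B j) := by
    intro ω hω
    rw [Set.mem_iInter₂]
    intro j _
    have hXj : t < X j ω := lt_of_lt_of_le hω (Finset.inf'_le _ (Finset.mem_univ j))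
    show τ j < T (edgeOf j 0) ω + T (edgeOf j 1) ω + T (edgeOf j 2) ω
    rw [edgeOf_zero, edgeOf_one, edgeOf_two]
    exact lt_of_le_of_lt (hτle j) hXj
  calc (ℙ : Measure Ωn) {ω | t < M ω}
      ≤ (ℙ : Measure Ωn) (⋂ j ∈ (Finset.univ : Finset (Fin (n-1))),
          (fun ω (k : Fin 3) => T (edgeOf j k) ω) ⁻¹' (B j)) := measure_mono hsub
    _ = ∏ j ∈ (Finset.univ : Finset (Fin (n-1))),
          (ℙ : Measure Ωn) ((fun ω (k : Fin 3) => T (edgeOf j k) ω) ⁻¹' (B j)) :=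
        groups_indep T hindep hmeas (fun j k => edgeOf j k) edgeOf_inj B hBmeas _
    _ ≤ ∏ j ∈ (Finset.univ : Finset (Fin (n-1))), ENNReal.ofReal (qF (τ j)) :=
        Finset.prod_le_prod' (fun j _ => tail_single T hmeas hindep hdist j (hτnn j))
    _ ≤ ENNReal.ofReal (qF t * qF (min t 3) ^ (n-2)) := by
        rw [← Finset.mul_prod_erase Finset.univ _ (Finset.mem_univ j0)]
        have h1 : τ j0 = t := if_pos rfl
        have h2 : ∀ j ∈ Finset.univ.erase j0,
            ENNReal.ofReal (qF (τ j)) = ENNReal.ofReal (qF (min t 3)) := by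
          intro j hj
          rw [show τ j = min t 3 from if_neg (Finset.ne_of_mem_erase hj)]
        rw [Finset.prod_congr rfl h2, Finset.prod_const, h1,
          Finset.card_erase_of_mem (Finset.mem_univ _), Finset.card_univ, Fintype.card_fin]
        have hmin : (0:ℝ) ≤ min t 3 := le_min ht.le (by norm_num)
        rw [← ENNReal.ofReal_pow (qF_nonneg hmin), ← ENNReal.ofReal_mul (qF_nonneg ht.le)]
        have : n - 1 - 1 = n - 2 := by omega
        rw [this]

/-! ### Evaluation of the tail integral -/

lemma rpow_cube {x : ℝ} (hx : 0 ≤ x) : (x ^ ((1:ℝ)/3)) ^ (3:ℕ) = x := by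
  rw [← Real.rpow_natCast (x ^ ((1:ℝ)/3)) 3, ← Real.rpow_mul hx]
  norm_num

lemma cube_root_216 : ((216:ℝ)) ^ ((1:ℝ)/3) = 6 := by
  rw [show (216:ℝ) = 6 ^ ((3:ℕ):ℝ) by rw [Real.rpow_natCast]; norm_num,
    ← Real.rpow_mul (by norm_num)]
  norm_num

lemma cube_root_8 : ((8:ℝ)) ^ ((1:ℝ)/3) = 2 := by
  rw [show (8:ℝ) = 2 ^ ((3:ℕ):ℝ) by rw [Real.rpow_natCast]; norm_num,
    ← Real.rpow_mul (by norm_num)]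
  norm_num

lemma final_numeric {n : ℕ} (hn3 : 3 ≤ n) :
    3 * Real.exp 1 / ((((n:ℝ)-2)/216) ^ ((1:ℝ)/3)) + 9 * Real.exp (-(27 * (((n:ℝ)-2)/216)))
      ≤ 1000 * (n:ℝ) ^ (-(1/3) : ℝ) := by
  have hncast : (3:ℝ) ≤ (n:ℝ) := by exact_mod_cast hn3
  set y : ℝ := (n:ℝ) - 2 with hy
  have hy1 : 1 ≤ y := by simp only [hy]; linarith
  have hy0 : 0 < y := by linarith
  have hyr_pos : 0 < y ^ ((1:ℝ)/3) := Real.rpow_pos_of_pos hy0 _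
  have hden : (y/216) ^ ((1:ℝ)/3) = y ^ ((1:ℝ)/3) / 6 := by
    rw [Real.div_rpow hy0.le (by norm_num), cube_root_216]
  have hterm1 : 3 * Real.exp 1 / ((y/216) ^ ((1:ℝ)/3)) ≤ 54 / y ^ ((1:ℝ)/3) := by
    rw [hden, div_div_eq_mul_div]
    have he : Real.exp 1 ≤ 3 := (Real.exp_one_lt_d9.trans (by norm_num)).le
    have : 3 * Real.exp 1 * 6 ≤ 54 := by nlinarith [Real.exp_pos 1]
    gcongr
  have hterm2 : 9 * Real.exp (-(27 * (y/216))) ≤ 72 / y ^ ((1:ℝ)/3) := by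
    rw [show 27 * (y/216) = y/8 by ring]
    have h1 : y/8 + 1 ≤ Real.exp (y/8) := Real.add_one_le_exp _
    have h2 : Real.exp (-(y/8)) ≤ 8/y := by
      rw [Real.exp_neg]
      have hpos : (0:ℝ) < y/8 := by linarith
      have : (Real.exp (y/8))⁻¹ ≤ (y/8)⁻¹ := by
        apply inv_anti₀ hpos
        linarith
      rwa [inv_div] at this
    have h3 : 9 * Real.exp (-(y/8)) ≤ 72 / y := by
      rw [show (72:ℝ)/y = 9 * (8/y) by ring]
      have := Real.exp_pos (-(y/8))
      gcongr
    refine h3.trans ?_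
    have h4 : y ^ ((1:ℝ)/3) ≤ y := by
      have := Real.rpow_le_rpow_of_exponent_le hy1 (show (1:ℝ)/3 ≤ 1 by norm_num)
      rwa [Real.rpow_one] at this
    gcongr
  have hsum : 3 * Real.exp 1 / ((y/216) ^ ((1:ℝ)/3)) + 9 * Real.exp (-(27 * (y/216)))
      ≤ 126 / y ^ ((1:ℝ)/3) := by
    have : (54:ℝ) / y ^ ((1:ℝ)/3) + 72 / y ^ ((1:ℝ)/3) = 126 / y ^ ((1:ℝ)/3) := by ring
    linarith
  refine hsum.trans ?_
  have hnpos : (0:ℝ) < (n:ℝ) := by linarith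
  have hrw : (1000:ℝ) * (n:ℝ) ^ (-(1/3) : ℝ) = 1000 / (n:ℝ) ^ ((1:ℝ)/3) := by
    rw [Real.rpow_neg hnpos.le]
    exact (div_eq_mul_inv _ _).symm
  rw [hrw]
  have hn8y : (n:ℝ) ≤ 8 * y := by simp only [hy]; linarith
  have hcube : (n:ℝ) ^ ((1:ℝ)/3) ≤ 2 * y ^ ((1:ℝ)/3) := by
    have h5 : (n:ℝ) ^ ((1:ℝ)/3) ≤ (8*y) ^ ((1:ℝ)/3) :=
      Real.rpow_le_rpow hnpos.le hn8y (by norm_num)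
    rwa [Real.mul_rpow (by norm_num) hy0.le, cube_root_8] at h5
  have hnr_pos : 0 < (n:ℝ) ^ ((1:ℝ)/3) := Real.rpow_pos_of_pos hnpos _
  rw [div_le_div_iff₀ hyr_pos hnr_pos]
  nlinarith [hyr_pos]

lemma integral_bound {n : ℕ} (hn : 2 ≤ n) :
    ∫⁻ t in Ioi (0:ℝ), ENNReal.ofReal (qF t * qF (min t 3) ^ (n-2))
      ≤ ENNReal.ofReal (1000 * (n:ℝ) ^ (-(1/3) : ℝ)) := by
  have hn2 : (2:ℝ) ≤ (n:ℝ) := by exact_mod_cast hn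
  set c : ℝ := ((n:ℝ) - 2)/216 with hc
  have hc0 : 0 ≤ c := div_nonneg (by linarith) (by norm_num)
  have hmeas1 : Measurable (fun t : ℝ =>
      ENNReal.ofReal (3 * Real.exp (-(3⁻¹ * t)) * Real.exp (-(c * (min t 3)^3)))) := by
    apply ENNReal.measurable_ofReal.comp
    apply Continuous.measurable
    have h1 : Continuous (fun t : ℝ => 3 * Real.exp (-(3⁻¹ * t))) := by continuity
    have h2 : Continuous (fun t : ℝ => Real.exp (-(c * (min t 3)^3))) := by
      apply Real.continuous_exp.comp
      have : Continuous (fun t : ℝ => min t 3) := continuous_id.min continuous_const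
      continuity
    exact h1.mul h2
  have step1 : ∫⁻ t in Ioi (0:ℝ), ENNReal.ofReal (qF t * qF (min t 3) ^ (n-2))
      ≤ ∫⁻ t in Ioi (0:ℝ),
        ENNReal.ofReal (3 * Real.exp (-(3⁻¹ * t)) * Real.exp (-(c * (min t 3)^3))) := by
    refine setLIntegral_mono hmeas1 ?_
    intro t ht
    rw [Set.mem_Ioi] at ht
    have hmin0 : (0:ℝ) ≤ min t 3 := le_min ht.le (by norm_num)
    have hmin3 : min t 3 ≤ 3 := min_le_right _ _
    apply ENNReal.ofReal_le_ofReal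
    have h1 : qF t ≤ 3 * Real.exp (-(3⁻¹ * t)) := by
      have := qF_le_exp ht.le
      rwa [show -(t/3) = -(3⁻¹ * t) by ring] at this
    have h2 : qF (min t 3) ^ (n-2) ≤ Real.exp (-(c * (min t 3)^3)) := by
      calc qF (min t 3) ^ (n-2) ≤ (Real.exp (-((min t 3)^3/216))) ^ (n-2) :=
            pow_le_pow_left₀ (qF_nonneg hmin0) (qF_le_cube hmin0 hmin3) _
        _ = Real.exp (-(c * (min t 3)^3)) := by
            rw [← Real.exp_nat_mul]
            congr 1
            have hcast : ((n - 2 : ℕ) : ℝ) = (n:ℝ) - 2 := by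
              have := Nat.cast_sub (show 2 ≤ n from hn) (R := ℝ)
              simpa using this
            rw [hcast, hc]
            ring
    calc qF t * qF (min t 3) ^ (n-2)
        ≤ (3 * Real.exp (-(3⁻¹ * t))) * Real.exp (-(c * (min t 3)^3)) := by
          apply mul_le_mul h1 h2 (pow_nonneg (qF_nonneg hmin0) _) (by positivity)
      _ = 3 * Real.exp (-(3⁻¹ * t)) * Real.exp (-(c * (min t 3)^3)) := by ring
  refine step1.trans ?_
  rw [show Ioi (0:ℝ) = Ioc 0 3 ∪ Ioi 3 from (Set.Ioc_union_Ioi_eq_Ioi (by norm_num)).symm,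
    lintegral_union measurableSet_Ioi (Set.Ioc_disjoint_Ioi le_rfl)]
  -- second piece
  have hpiece2 : ∫⁻ t in Ioi (3:ℝ),
      ENNReal.ofReal (3 * Real.exp (-(3⁻¹ * t)) * Real.exp (-(c * (min t 3)^3)))
      ≤ ENNReal.ofReal (9 * Real.exp (-(27 * c))) := by
    have heq : ∫⁻ t in Ioi (3:ℝ),
        ENNReal.ofReal (3 * Real.exp (-(3⁻¹ * t)) * Real.exp (-(c * (min t 3)^3)))
        = ∫⁻ t in Ioi (3:ℝ),
          ENNReal.ofReal ((3 * Real.exp (-(27 * c))) * Real.exp (-(3⁻¹ * t))) := by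
      refine setLIntegral_congr_fun measurableSet_Ioi ?_
      intro t ht
      rw [Set.mem_Ioi] at ht
      beta_reduce
      congr 1
      rw [min_eq_right ht.le, show -(c * (3:ℝ)^3) = -(27 * c) by ring]
      ring
    rw [heq, lint_exp_Ioi (by norm_num : (0:ℝ) < 3⁻¹) 3 _
      (by positivity : (0:ℝ) ≤ 3 * Real.exp (-(27 * c)))]
    apply ENNReal.ofReal_le_ofReal
    have hE : Real.exp (-(3⁻¹ * 3)) ≤ 1 := Real.exp_le_one_iff.mpr (by norm_num)
    have hE2 : 0 < Real.exp (-(27 * c)) := Real.exp_pos _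
    rw [div_le_iff₀ (by norm_num : (0:ℝ) < 3⁻¹)]
    nlinarith
  rcases eq_or_lt_of_le hn with hn2' | hn3
  · -- n = 2 : c = 0
    have hczero : c = 0 := by rw [hc, ← hn2']; norm_num
    have hpiece1 : ∫⁻ t in Ioc (0:ℝ) 3,
        ENNReal.ofReal (3 * Real.exp (-(3⁻¹ * t)) * Real.exp (-(c * (min t 3)^3)))
        ≤ ENNReal.ofReal 9 := by
      have heq : ∀ t : ℝ, ENNReal.ofReal (3 * Real.exp (-(3⁻¹ * t)) * Real.exp (-(c * (min t 3)^3)))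
          = ENNReal.ofReal (3 * Real.exp (-(3⁻¹ * t))) := by
        intro t
        rw [hczero]
        norm_num
      simp only [heq]
      refine (lintegral_mono_set (Set.Ioc_subset_Ioi_self)).trans ?_
      rw [lint_exp_Ioi (by norm_num : (0:ℝ) < 3⁻¹) 0 3 (by norm_num)]
      apply ENNReal.ofReal_le_ofReal
      norm_num
    refine (add_le_add hpiece1 hpiece2).trans ?_
    rw [← ENNReal.ofReal_add (by norm_num) (by positivity)]
    apply ENNReal.ofReal_le_ofReal
    rw [hczero, ← hn2']
    have h2r : (2:ℝ) ^ ((1:ℝ)/3) ≤ 2 := by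
      have := Real.rpow_le_rpow_of_exponent_le (show (1:ℝ) ≤ 2 by norm_num)
        (show (1:ℝ)/3 ≤ 1 by norm_num)
      rwa [Real.rpow_one] at this
    have h2pos : (0:ℝ) < (2:ℝ) ^ ((1:ℝ)/3) := Real.rpow_pos_of_pos (by norm_num) _
    have hrw : ((2:ℕ):ℝ) ^ (-(1/3) : ℝ) = ((2:ℝ) ^ ((1:ℝ)/3))⁻¹ := by
      rw [show ((2:ℕ):ℝ) = (2:ℝ) by norm_num, ← Real.rpow_neg_one ((2:ℝ) ^ ((1:ℝ)/3)),
        ← Real.rpow_mul (by norm_num)]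
      norm_num
    rw [hrw]
    have : (2:ℝ)⁻¹ ≤ ((2:ℝ) ^ ((1:ℝ)/3))⁻¹ := by
      apply inv_anti₀ h2pos h2r
    have hexp0 : Real.exp (-(27 * 0 : ℝ)) = 1 := by norm_num
    rw [hexp0]
    linarith
  · -- n ≥ 3
    have hn3' : 3 ≤ n := hn3
    have hy0 : (0:ℝ) < (n:ℝ) - 2 := by
      have : (3:ℝ) ≤ (n:ℝ) := by exact_mod_cast hn3'
      linarith
    have hcpos : 0 < c := by rw [hc]; positivity
    set d : ℝ := c ^ ((1:ℝ)/3) with hd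
    have hdpos : 0 < d := Real.rpow_pos_of_pos hcpos _
    have hd3 : d ^ (3:ℕ) = c := rpow_cube hcpos.le
    have hpiece1 : ∫⁻ t in Ioc (0:ℝ) 3,
        ENNReal.ofReal (3 * Real.exp (-(3⁻¹ * t)) * Real.exp (-(c * (min t 3)^3)))
        ≤ ENNReal.ofReal (3 * Real.exp 1 / d) := by
      have hstep : ∫⁻ t in Ioc (0:ℝ) 3,
          ENNReal.ofReal (3 * Real.exp (-(3⁻¹ * t)) * Real.exp (-(c * (min t 3)^3)))
          ≤ ∫⁻ t in Ioc (0:ℝ) 3, ENNReal.ofReal ((3 * Real.exp 1) * Real.exp (-(d * t))) := by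
        refine setLIntegral_mono ?_ ?_
        · apply ENNReal.measurable_ofReal.comp
          apply Continuous.measurable
          continuity
        · intro t ht
          obtain ⟨ht0, ht3⟩ := ht
          apply ENNReal.ofReal_le_ofReal
          rw [min_eq_left ht3]
          have h1 : Real.exp (-(3⁻¹ * t)) ≤ 1 := Real.exp_le_one_iff.mpr (by linarith)
          have h2 : Real.exp (-(c * t^3)) ≤ Real.exp 1 * Real.exp (-(d * t)) := by
            rw [← Real.exp_add]
            apply Real.exp_le_exp.mpr
            have := cube_amgm hdpos.le ht0.le
            rw [hd3] at this
            linarith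
          have he1 : 0 < Real.exp (-(3⁻¹ * t)) := Real.exp_pos _
          have he2 : 0 < Real.exp (-(c * t^3)) := Real.exp_pos _
          have he3 : 0 < Real.exp 1 * Real.exp (-(d * t)) := by positivity
          nlinarith
      refine hstep.trans ?_
      refine (lintegral_mono_set (Set.Ioc_subset_Ioi_self)).trans ?_
      rw [lint_exp_Ioi hdpos 0 _ (by positivity)]
      apply ENNReal.ofReal_le_ofReal
      rw [mul_zero, neg_zero, Real.exp_zero, mul_one]
    refine (add_le_add hpiece1 hpiece2).trans ?_
    rw [← ENNReal.ofReal_add (by positivity) (by positivity)]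
    apply ENNReal.ofReal_le_ofReal
    have := final_numeric hn3'
    rw [← hc] at this
    rw [hd, hc]
    exact this

lemma walkTime_single {n : ℕ} (h : 1 ≤ n) (ω : (HQ n).edgeSet → ℝ) :
    walkTime (HQ n) ω (SimpleGraph.Walk.cons (adj_v0_w0 h) SimpleGraph.Walk.nil)
      = ω ⟨s(vv0 n, ww0 n), adj_v0_w0 h⟩ := by
  simp [walkTime, SimpleGraph.Dart.edge]

end Aux

/-- Let `T(n,1)` be the first-passage time between two vertices at
Hamming distance `1` in the hypercube `K₂^n` with i.i.d. `Exp(1)` edge weights. Then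
there is a constant `C > 0` with `E[T(n,1)] ≤ C·n^{−1/3}` for all `n ≥ 1`. -/
theorem hypercube_distance_one_expectation
    (Ω : ℕ → Type*) [∀ n, MeasureSpace (Ω n)]
    (hprob : ∀ n, IsProbabilityMeasure (ℙ : Measure (Ω n)))
    (T : ∀ n, (cartPower (⊤ : SimpleGraph Bool) n).edgeSet → Ω n → ℝ)
    (hmeas : ∀ n e, Measurable (T n e))
    (hindep : ∀ n, iIndepFun (β := fun _ => ℝ) (m := fun _ => Real.measurableSpace) (T n) ℙ)
    (hdist : ∀ n e, Measure.map (T n e) ℙ = expMeasure 1) :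
    ∃ C : ℝ, 0 < C ∧ ∀ n : ℕ, 1 ≤ n →
      ∫⁻ ω, ENNReal.ofReal (fppTime (cartPower (⊤ : SimpleGraph Bool) n)
          (fun e => T n e ω) (fun _ => false) (fun i => decide ((i : Fin n).val = 0)))
        ∂(ℙ : Measure (Ω n)) ≤
      ENNReal.ofReal (C * (n : ℝ) ^ (-(1 / 3 : ℝ))) := by
  refine ⟨1000, by norm_num, ?_⟩
  intro n hn
  haveI := hprob n
  show ∫⁻ ω, ENNReal.ofReal (fppTime (HQ n) (fun e => T n e ω) (vv0 n) (ww0 n))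
      ∂(ℙ : Measure (Ω n)) ≤ ENNReal.ofReal (1000 * (n : ℝ) ^ (-(1 / 3 : ℝ)))
  rcases eq_or_lt_of_le hn with h1 | h2
  · -- n = 1
    subst h1
    set e00 : (HQ 1).edgeSet := ⟨s(vv0 1, ww0 1), adj_v0_w0 le_rfl⟩ with he00
    have hlay := fpp_lint_le (T 1) (hmeas 1) (hdist 1) (fun ω => T 1 e00 ω) (hmeas 1 e00)
      (fun ω hω => ⟨hω e00, by
        have h := fpp_le_walkTime (fun e => T 1 e ω) hω
          (SimpleGraph.Walk.cons (adj_v0_w0 le_rfl) SimpleGraph.Walk.nil)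
        rwa [walkTime_single le_rfl] at h⟩)
    refine hlay.trans ?_
    have hb : ∫⁻ t in Ioi (0:ℝ), (ℙ : Measure (Ω 1)) {ω | t < T 1 e00 ω}
        ≤ ∫⁻ t in Ioi (0:ℝ), ENNReal.ofReal (1 * Real.exp (-(1 * t))) := by
      refine setLIntegral_mono ?_ ?_
      · apply ENNReal.measurable_ofReal.comp
        apply Continuous.measurable
        continuity
      · intro t ht
        rw [Set.mem_Ioi] at ht
        have hset : {ω | t < T 1 e00 ω} = (T 1 e00) ⁻¹' (Ioi t) := rfl
        rw [hset, ← Measure.map_apply (hmeas 1 e00) measurableSet_Ioi, hdist 1 e00,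
          expMeasure_Ioi ht.le]
        exact le_of_eq (by norm_num)
    refine hb.trans ?_
    rw [lint_exp_Ioi one_pos 0 1 (by norm_num)]
    apply ENNReal.ofReal_le_ofReal
    rw [Nat.cast_one, Real.one_rpow]
    norm_num
  · exact (main2 h2 (T n) (hmeas n) (hindep n) (hdist n)).trans (integral_bound h2)

end FPP
end
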